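/- arXiv:math/0607629 — 2 statements merged into one kernel-verified Lean document; each statement's English description precedes it below -/
import Mathlib

section
/- The collection {C(n) = Hom_X(A^{⊗(n+2)}, A)} with structure maps γ and identity Id forms a non-symmetric operad, and π is a multiplication on this operad; hence the graded vector space CH*_Hopf(A,A) = ⊕ₙ C(n) with the induced brace operations x{x₁,…,xₙ} = Σ (±) γ(x; Id,…,x₁,…,xₙ,…,Id) is a brace algebra with multiplication π, i.e., π{π} = 0. -/
open TensorProduct

noncomputable section ModuleAlgebraDeligne

universe u

variable (K A H : Type u)

/-- An `H`-module-algebra structure on `A`: an `H`-action by `K`-linear maps making `A`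
an `H`-module, such that multiplication and unit of `A` are `H`-linear
(the Sweedler sum `∑ (b₍₁₎a₁)(b₍₂₎a₂)` is expressed via `Coalgebra.comul`). -/
structure ModAlg [Field K] [Ring A] [Algebra K A] [Ring H] [Bialgebra K H] where
  act : H →ₗ[K] A →ₗ[K] A
  act_one : ∀ a : A, act 1 a = a
  act_mul : ∀ (b c : H) (a : A), act (b * c) a = act b (act c a)
  act_unit : ∀ b : H, act b (1 : A) = (Coalgebra.counit (R := K) b) • (1 : A)
  act_alg : ∀ (b : H) (a₁ a₂ : A),
    act b (a₁ * a₂) =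
      LinearMap.mul' K A
        ((TensorProduct.homTensorHomMap (RingHom.id K) A A A A)
          (TensorProduct.map act act (Coalgebra.comul (R := K) b)) (a₁ ⊗ₜ[K] a₂))

variable [Field K] [Ring A] [Algebra K A] [Ring H] [Bialgebra K H]

/-- The defining formula of the crossed product multiplication on `X = A ⊗ A ⊗ H`:
`(a₁ ⊗ a₁' ⊗ b¹)(a₂ ⊗ a₂' ⊗ b²) = ∑ a₁(b¹₍₁₎a₂) ⊗ (b¹₍₃₎a₂')a₁' ⊗ b¹₍₂₎b²`. -/
def XMulFormula (act : H →ₗ[K] A →ₗ[K] A)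
    (mul : (A ⊗[K] (A ⊗[K] H)) →ₗ[K] (A ⊗[K] (A ⊗[K] H)) →ₗ[K] (A ⊗[K] (A ⊗[K] H))) :
    Prop :=
  ∀ (a₁ a₁' : A) (b₁ : H) (a₂ a₂' : A) (b₂ : H),
    mul (a₁ ⊗ₜ[K] (a₁' ⊗ₜ[K] b₁)) (a₂ ⊗ₜ[K] (a₂' ⊗ₜ[K] b₂)) =
      TensorProduct.map
        (LinearMap.mulLeft K a₁ ∘ₗ act.flip a₂)
        ((TensorProduct.map (LinearMap.mulRight K a₁' ∘ₗ act.flip a₂')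
            (LinearMap.mulRight K b₂)) ∘ₗ (TensorProduct.comm K H H).toLinearMap)
        ((LinearMap.lTensor H (Coalgebra.comul (R := K)) ∘ₗ Coalgebra.comul (R := K)) b₁)

/-- Iterated tensor power `A^{⊗(n+1)}` (so `Tpow K A n` has `n+1` tensor factors),
bundled with its module structure. -/
def TpowAux : ℕ → Σ' (T : Type u) (_ : AddCommGroup T), Module K T
  | 0 => ⟨A, inferInstance, inferInstance⟩
  | n + 1 =>
    letI T := TpowAux n
    letI : AddCommGroup T.1 := T.2.1
    letI : Module K T.1 := T.2.2
    ⟨A ⊗[K] T.1, inferInstance, inferInstance⟩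

/-- `Tpow K A n = A^{⊗(n+1)}`. -/
def Tpow (n : ℕ) : Type u := (TpowAux K A n).1

instance instTpowAuxACG (n : ℕ) : AddCommGroup (TpowAux K A n).1 := (TpowAux K A n).2.1
instance instTpowAuxMod (n : ℕ) : Module K (TpowAux K A n).1 := (TpowAux K A n).2.2
instance (n : ℕ) : AddCommGroup (Tpow K A n) := (TpowAux K A n).2.1
instance (n : ℕ) : Module K (Tpow K A n) := (TpowAux K A n).2.2

/-- Cast between equal tensor powers (identity when `m = n`, junk `0` otherwise). -/
def tmap (m n : ℕ) : Tpow K A m →ₗ[K] Tpow K A n :=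
  if h : m = n then by subst h; exact LinearMap.id else 0

/-- Left multiplication by an element of `A` on the first tensor factor. -/
def lmulL : ∀ n : ℕ, A →ₗ[K] Tpow K A n →ₗ[K] Tpow K A n
  | 0 => LinearMap.mul K A
  | n + 1 =>
    (LinearMap.rTensorHom (R := K) (M := Tpow K A n) (N := A) (P := A)) ∘ₗ
      LinearMap.mul K A

/-- Right multiplication by an element of `A` on the last tensor factor. -/
def rmulL : ∀ n : ℕ, A →ₗ[K] Tpow K A n →ₗ[K] Tpow K A n
  | 0 => (LinearMap.mul K A).flip
  | n + 1 =>
    (LinearMap.lTensorHom (R := K) (M := A) (N := Tpow K A n) (P := Tpow K A n)) ∘ₗ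
      rmulL n

/-- Componentwise action of `H^{⊗(n+1)}` on `A^{⊗(n+1)}` induced by an action of `H` on `A`. -/
def tact (act : H →ₗ[K] A →ₗ[K] A) :
    ∀ n : ℕ, Tpow K H n →ₗ[K] Tpow K A n →ₗ[K] Tpow K A n
  | 0 => act
  | n + 1 =>
    (TensorProduct.homTensorHomMap (RingHom.id K) A (Tpow K A n) A (Tpow K A n)) ∘ₗ
      TensorProduct.map act (tact act n)

/-- Iterated comultiplication `Δⁿ : H → H^{⊗(n+1)}`. -/
def itComul : ∀ n : ℕ, H →ₗ[K] Tpow K H n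
  | 0 => LinearMap.id
  | n + 1 => LinearMap.lTensor H (itComul n) ∘ₗ Coalgebra.comul (R := K)

/-- The action of the pure tensor `a ⊗ a' ⊗ b ∈ X = A ⊗ A ⊗ H` on `A^{⊗(n+1)}`:
`(a ⊗ a' ⊗ b)(a₀ ⊗ ⋯ ⊗ aₙ) = ∑ a b₍₁₎a₀ ⊗ b₍₂₎a₁ ⊗ ⋯ ⊗ b₍ₙ₊₁₎aₙ a'`. -/
def xActP (act : H →ₗ[K] A →ₗ[K] A) (n : ℕ) (a a' : A) (b : H) :
    Tpow K A n →ₗ[K] Tpow K A n :=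
  lmulL K A n a ∘ₗ rmulL K A n a' ∘ₗ tact K A H act n (itComul K H n b)

/-- `X`-linearity (equivariance with respect to all pure tensors of `X = A ⊗ A ⊗ H`)
of a degree-`m` Hopf-Hochschild cochain `g : A^{⊗(m+2)} → A`. -/
def IsXLinear (act : H →ₗ[K] A →ₗ[K] A) (m : ℕ) (g : Tpow K A (m + 1) →ₗ[K] A) : Prop :=
  ∀ (a a' : A) (b : H) (t : Tpow K A (m + 1)),
    g (xActP K A H act (m + 1) a a' b t) = a * act b (g t) * a'

/-- Append an element of `A` as a new last tensor factor. -/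
def appendA : ∀ n : ℕ, A →ₗ[K] Tpow K A n →ₗ[K] Tpow K A (n + 1)
  | 0 => (TensorProduct.mk K A A).flip
  | n + 1 =>
    (LinearMap.lTensorHom (R := K) (M := A) (N := Tpow K A n) (P := Tpow K A (n + 1))) ∘ₗ
      appendA n

/-- The "inner part" `g(1 ⊗ - ⊗ 1) : A^{⊗n} → A` of a cochain `g : A^{⊗(n+2)} → A`. -/
def innerC {n : ℕ} (g : Tpow K A (n + 2) →ₗ[K] A) : Tpow K A n →ₗ[K] A :=
  g ∘ₗ TensorProduct.mk K A (Tpow K A (n + 1)) 1 ∘ₗ appendA K A n 1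

/-- Consume the first `n+1` tensor factors of `A^{⊗(S+n+2)}` using a map `A^{⊗(n+1)} → A`,
leaving the remaining `A^{⊗(S+1)}`. -/
def consume : ∀ n S : ℕ,
    (Tpow K A n →ₗ[K] A) →ₗ[K] (Tpow K A (S + n + 1) →ₗ[K] A ⊗[K] Tpow K A S)
  | 0, S => LinearMap.rTensorHom (R := K) (M := Tpow K A S) (N := A) (P := A)
  | n + 1, S =>
    (TensorProduct.lift.equiv (RingHom.id K) A (Tpow K A (S + n + 1)) (A ⊗[K] Tpow K A S)).toLinearMap ∘ₗ
      (LinearMap.llcomp K A (Tpow K A n →ₗ[K] A)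
          (Tpow K A (S + n + 1) →ₗ[K] A ⊗[K] Tpow K A S) (consume n S)) ∘ₗ
        TensorProduct.lcurry (RingHom.id K) A (Tpow K A n) A

/-- An operadic "entry": a Hopf-Hochschild cochain of degree `m`,
i.e. a linear map `A^{⊗(m+2)} → A`. -/
def Entry : Type u := Σ' m : ℕ, Tpow K A (m + 1) →ₗ[K] A

/-- Total degree of a list of entries. -/
def sumA : List (Entry K A) → ℕ
  | [] => 0
  | e :: l => sumA l + e.1

/-- The block-substitution map underlying the operad structure maps `γ`. -/
def gammaAux : ∀ l : List (Entry K A), Tpow K A (sumA K A l) →ₗ[K] Tpow K A l.length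
  | [] => LinearMap.id
  | ⟨0, _⟩ :: _ => 0
  | ⟨n + 1, g⟩ :: l =>
    LinearMap.lTensor A (gammaAux l) ∘ₗ consume K A n (sumA K A l) (innerC K A g)

/-- The operad structure map `γ(f; g₁, …, g_k)` of the Hopf-Hochschild cochain operad. -/
def gamma (l : List (Entry K A)) (f : Tpow K A (l.length + 1) →ₗ[K] A) :
    Tpow K A (sumA K A l + 1) →ₗ[K] A :=
  f ∘ₗ LinearMap.lTensor A (gammaAux K A l)

/-- `γ(f; g₁, …, g_k)` with degree bookkeeping by casts: `f` has degree `k`,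
the result is regarded as a map on `Tpow K A M = A^{⊗(M+1)}`
(the casts are identities in every intended use, where `l.length = k`
and `M = sumA l + 1`). -/
def gammaD (k : ℕ) (f : Tpow K A (k + 1) →ₗ[K] A) (l : List (Entry K A)) (M : ℕ) :
    Tpow K A M →ₗ[K] A :=
  gamma K A l (f ∘ₗ tmap K A (l.length + 1) (k + 1)) ∘ₗ tmap K A M (sumA K A l + 1)

/-- The identity cochain `Id ∈ C(1)`, `a₀ ⊗ a₁ ⊗ a₂ ↦ a₀a₁a₂`. -/
def idC : Tpow K A 2 →ₗ[K] A :=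
  LinearMap.mul' K A ∘ₗ LinearMap.lTensor A (LinearMap.mul' K A)

/-- `Id` as an entry. -/
def idE : Entry K A := ⟨1, idC K A⟩

/-- The multiplication cochain `π ∈ C(2)`, `a₀ ⊗ a₁ ⊗ a₂ ⊗ a₃ ↦ a₀a₁a₂a₃`. -/
def piC : Tpow K A 3 →ₗ[K] A :=
  LinearMap.mul' K A ∘ₗ
    LinearMap.lTensor A (LinearMap.mul' K A ∘ₗ LinearMap.lTensor A (LinearMap.mul' K A))

/-- The face map `∂ⱼ : A^{⊗(n+2)} → A^{⊗(n+1)}` of the bar complex. -/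
def face : ∀ n j : ℕ, Tpow K A (n + 1) →ₗ[K] Tpow K A n
  | n, 0 => TensorProduct.lift (lmulL K A n)
  | 0, _ + 1 => TensorProduct.lift (lmulL K A 0)
  | n + 1, j + 1 => LinearMap.lTensor A (face n j)

/-- The bar differential `d_n = ∑_{j=0}^n (−1)ʲ ∂ⱼ : A^{⊗(n+2)} → A^{⊗(n+1)}`. -/
def barDiff (n : ℕ) : Tpow K A (n + 1) →ₗ[K] Tpow K A n :=
  ∑ j ∈ Finset.range (n + 1), (-1 : K) ^ j • face K A n j

end ModuleAlgebraDeligne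

noncomputable section AuxMachinery
open TensorProduct

attribute [reducible] Entry sumA idE

universe v

variable (K A H : Type u) [Field K] [Ring A] [Algebra K A] [Ring H] [Bialgebra K H]

@[simp] lemma tmap_self (n : ℕ) : tmap K A n n = LinearMap.id := by simp [tmap]

lemma tmap_ne {m n : ℕ} (h : m ≠ n) : tmap K A m n = 0 := by simp [tmap, h]

lemma lTensor_tmap (m n : ℕ) :
    LinearMap.lTensor A (tmap K A m n) = tmap K A (m + 1) (n + 1) := by
  by_cases h : m = n
  · subst h; simp; rfl
  · rw [tmap_ne K A h, tmap_ne K A (by omega)]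
    exact LinearMap.lTensor_zero A

/-- Pure tensors in `Tpow`, with junk value `0` when the list has the wrong length. -/
def tpl : A → (l : List A) → Tpow K A l.length
  | a, [] => a
  | a, b :: l => a ⊗ₜ[K] tpl b l

/-- Pure tensors in `Tpow K A n`, with junk value `0` when the list has the wrong length. -/
def tp (n : ℕ) (a : A) (l : List A) : Tpow K A n :=
  tmap K A l.length n (tpl K A a l)

@[simp] lemma tp_nil (a : A) : tp K A 0 a [] = a := by simp [tp, tpl]; rfl

lemma tp_cons (n : ℕ) (a b : A) (l : List A) :
    tp K A (n + 1) a (b :: l) = a ⊗ₜ[K] tp K A n b l := by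
  show tmap K A (l.length + 1) (n + 1) (a ⊗ₜ[K] tpl K A b l) = _
  rw [← lTensor_tmap]
  rfl

lemma tp_wrong {n : ℕ} (a : A) {l : List A} (h : l.length ≠ n) : tp K A n a l = 0 := by
  simp [tp, tmap_ne K A h]

lemma tmap_tp {m : ℕ} (n : ℕ) (a : A) {l : List A} (h : l.length = m) :
    tmap K A m n (tp K A m a l) = tp K A n a l := by
  by_cases hn : m = n
  · subst hn; simp
  · simp [tmap_ne K A hn, tp_wrong K A a (show l.length ≠ n from by omega)]

lemma tp_ext {n : ℕ} {M : Type*} [AddCommGroup M] [Module K M]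
    {f g : Tpow K A n →ₗ[K] M}
    (h : ∀ (a : A) (l : List A), l.length = n → f (tp K A n a l) = g (tp K A n a l)) :
    f = g := by
  induction n with
  | zero =>
    ext a
    exact h a [] rfl
  | succ n ih =>
    refine TensorProduct.ext' (fun a t => ?_)
    have key : f ∘ₗ TensorProduct.mk K A (Tpow K A n) a
        = g ∘ₗ TensorProduct.mk K A (Tpow K A n) a := by
      refine ih (fun b l hl => ?_)
      have := h a (b :: l) (by simp [hl])
      rw [tp_cons] at this
      exact this
    exact LinearMap.congr_fun key t

lemma appendA_tp (n : ℕ) (x a : A) (l : List A) :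
    appendA K A n x (tp K A n a l) = tp K A (n + 1) a (l ++ [x]) := by
  induction n generalizing a l with
  | zero =>
    cases l with
    | nil => simp only [List.nil_append]; rw [tp_nil, tp_cons, tp_nil]; rfl
    | cons b l' =>
      rw [tp_wrong K A a (by simp), tp_wrong K A a (by simp), map_zero]
  | succ n ih =>
    cases l with
    | nil =>
      rw [tp_wrong K A a (by simp), tp_wrong K A a (by simp), map_zero]
    | cons b l' =>
      rw [tp_cons]
      have h1 : appendA K A (n + 1) x (a ⊗ₜ[K] tp K A n b l')
          = a ⊗ₜ[K] appendA K A n x (tp K A n b l') := rfl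
      erw [h1, ih, List.cons_append, tp_cons]

lemma innerC_tp (n : ℕ) (g : Tpow K A (n + 2) →ₗ[K] A) (a : A) (l : List A) :
    innerC K A g (tp K A n a l) = g (tp K A (n + 2) 1 (a :: (l ++ [1]))) := by
  show g (TensorProduct.mk K A (Tpow K A (n + 1)) 1 (appendA K A n 1 (tp K A n a l))) = _
  rw [appendA_tp]
  congr 1
  exact (tp_cons K A (n + 1) 1 a (l ++ [1])).symm

lemma consume_succ_apply (d S : ℕ) (c : Tpow K A (d + 1) →ₗ[K] A) (a : A)
    (t : Tpow K A (S + d + 1)) :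
    consume K A (d + 1) S c (a ⊗ₜ[K] t)
      = consume K A d S ((TensorProduct.lcurry (RingHom.id K) A (Tpow K A d) A c) a) t := rfl

lemma consume_tp {d : ℕ} (S : ℕ) (c : Tpow K A d →ₗ[K] A) (a : A) {l₁ : List A}
    (h : l₁.length = d) (b : A) (l₂ : List A) :
    consume K A d S c (tp K A (S + d + 1) a (l₁ ++ b :: l₂))
      = c (tp K A d a l₁) ⊗ₜ[K] tp K A S b l₂ := by
  induction d generalizing a l₁ with
  | zero =>
    cases l₁ with
    | nil => rw [List.nil_append, tp_cons, tp_nil]; rfl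
    | cons x l₁' => simp at h
  | succ d ih =>
    cases l₁ with
    | nil => simp at h
    | cons x l₁' =>
      erw [List.cons_append, tp_cons, consume_succ_apply,
        show tp K A (S + (d + 1)) x (l₁' ++ b :: l₂)
          = tp K A (S + d + 1) x (l₁' ++ b :: l₂) from rfl,
        ih _ _ (by simpa using h)]
      congr 1
      rw [tp_cons]
      rfl

/-- The inner value of a block: `innerC` of the (cast of the) entry's cochain. -/
def gevC (e : Entry K A) (a : A) (t : List A) : A :=
  innerC K A (e.2 ∘ₗ tmap K A (e.1 - 1 + 2) (e.1 + 1)) (tp K A (e.1 - 1) a t)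

/-- List-level evaluation of `gammaAux` on pure tensors. -/
def gev : List (Entry K A) → A → List A → A × List A
  | [], a, ll => (a, ll)
  | e :: l', a, ll =>
    if e.1 = 0 then (0, []) else
    match ll.drop (e.1 - 1) with
    | [] => (0, [])
    | b :: ll₂ => (gevC K A e a (ll.take (e.1 - 1)),
        (gev l' b ll₂).1 :: (gev l' b ll₂).2)

lemma tp_zero_nil (n : ℕ) : tp K A n (0 : A) [] = 0 := by
  show tmap K A 0 n (0 : A) = 0
  exact map_zero _

lemma gev_cons_nil {e : Entry K A} (l' : List (Entry K A)) (a : A) (ll : List A)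
    (he : e.1 ≠ 0) (hd : ll.drop (e.1 - 1) = []) :
    gev K A (e :: l') a ll = (0, []) := by
  rw [gev]
  simp [he, hd]

lemma gev_cons {e : Entry K A} (l' : List (Entry K A)) (a : A) (ll : List A) (b : A)
    (ll₂ : List A) (he : e.1 ≠ 0) (hd : ll.drop (e.1 - 1) = b :: ll₂) :
    gev K A (e :: l') a ll
      = (gevC K A e a (ll.take (e.1 - 1)),
          (gev K A l' b ll₂).1 :: (gev K A l' b ll₂).2) := by
  rw [gev]
  simp [he, hd]

lemma gammaAux_tp (l' : List (Entry K A)) (a : A) (ll : List A) :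
    gammaAux K A l' (tp K A (sumA K A l') a ll)
      = tp K A l'.length (gev K A l' a ll).1 (gev K A l' a ll).2 := by
  induction l' generalizing a ll with
  | nil => simp only [gev]; rfl
  | cons e l' ih =>
    obtain ⟨m, g⟩ := e
    match m with
    | 0 =>
      rw [show gammaAux K A (⟨0, g⟩ :: l') = 0 from rfl, gev]
      simp [tp_zero_nil]
    | d + 1 =>
      have he : ((⟨d + 1, g⟩ : Entry K A)).1 ≠ 0 := Nat.succ_ne_zero d
      rw [show gammaAux K A (⟨d + 1, g⟩ :: l')
          = LinearMap.lTensor A (gammaAux K A l') ∘ₗ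
            consume K A d (sumA K A l') (innerC K A g) from rfl]
      rcases hd : ll.drop d with _ | ⟨b, ll₂⟩
      · have hlen : ll.length ≤ d := List.drop_eq_nil_iff.mp hd
        rw [gev_cons_nil K A l' a ll he (by simpa using hd)]
        erw [tp_wrong K A a (by simp [sumA]; omega), map_zero, tp_zero_nil]
      · have hdl : d < ll.length := by
          by_contra hc
          rw [List.drop_eq_nil_iff.2 (by omega)] at hd
          exact List.cons_ne_nil _ _ hd.symm
        have htake : (ll.take d).length = d := by
          simp [List.length_take]; omega
        rw [gev_cons K A l' a ll b ll₂ he (by simpa using hd)]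
        have hll : ll = ll.take d ++ b :: ll₂ := by
          conv_lhs => rw [← List.take_append_drop d ll]
          rw [hd]
        conv_lhs => rw [hll]
        have hstep : (LinearMap.lTensor A (gammaAux K A l') ∘ₗ
              consume K A d (sumA K A l') (innerC K A g))
              (tp K A (sumA K A (⟨d + 1, g⟩ :: l')) a (ll.take d ++ b :: ll₂))
            = LinearMap.lTensor A (gammaAux K A l')
                (consume K A d (sumA K A l') (innerC K A g)
                  (tp K A (sumA K A l' + d + 1) a (ll.take d ++ b :: ll₂))) := rfl
        refine hstep.trans ?_
        rw [consume_tp K A (sumA K A l') (innerC K A g) a htake b ll₂,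
          show LinearMap.lTensor A (gammaAux K A l')
            ((innerC K A g (tp K A d a (ll.take d))) ⊗ₜ[K]
              tp K A (sumA K A l') b ll₂)
            = (innerC K A g (tp K A d a (ll.take d))) ⊗ₜ[K]
              gammaAux K A l' (tp K A (sumA K A l') b ll₂) from rfl,
          ih b ll₂]
        simp [gevC, tp_cons]

lemma sumA_append (l₁ l₂ : List (Entry K A)) :
    sumA K A (l₁ ++ l₂) = sumA K A l₁ + sumA K A l₂ := by
  induction l₁ with
  | nil => simp [sumA]
  | cons e l ih => simp [sumA, ih]; omega

lemma gammaD_tp (k : ℕ) (f : Tpow K A (k + 1) →ₗ[K] A) (l : List (Entry K A)) (M : ℕ)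
    (a b : A) (ll : List A) (h2 : M = sumA K A l + 1) (h3 : l.length = k) :
    gammaD K A k f l M (tp K A M a (b :: ll))
      = f (tp K A (k + 1) a ((gev K A l b ll).1 :: (gev K A l b ll).2)) := by
  subst h3
  subst h2
  rw [gammaD, tmap_self, tmap_self, LinearMap.comp_id, LinearMap.comp_id, gamma, tp_cons]
  have h4 : (f ∘ₗ LinearMap.lTensor A (gammaAux K A l))
      (a ⊗ₜ[K] tp K A (sumA K A l) b ll)
      = f (a ⊗ₜ[K] gammaAux K A l (tp K A (sumA K A l) b ll)) := rfl
  refine h4.trans (congrArg f ?_)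
  rw [gammaAux_tp]
  exact (tp_cons K A l.length a (gev K A l b ll).1 (gev K A l b ll).2).symm

lemma sumA_replicate (k : ℕ) : sumA K A (List.replicate k (idE K A)) = k := by
  induction k with
  | zero => rfl
  | succ k ih =>
    rw [List.replicate_succ,
      show sumA K A (idE K A :: List.replicate k (idE K A))
        = sumA K A (List.replicate k (idE K A)) + 1 from rfl, ih]

lemma idC_tp (a b c : A) : idC K A (tp K A 2 a [b, c]) = a * (b * c) := by
  rw [tp_cons, tp_cons, tp_nil]
  rfl

lemma piC_tp (a b c d : A) : piC K A (tp K A 3 a [b, c, d]) = a * (b * (c * d)) := by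
  rw [tp_cons, tp_cons, tp_cons, tp_nil]
  rfl

lemma gevC_idE (a : A) : gevC K A (idE K A) a [] = a := by
  show innerC K A ((idC K A) ∘ₗ tmap K A 2 2) (tp K A 0 a []) = a
  rw [tmap_self, LinearMap.comp_id, innerC_tp]
  simpa using idC_tp K A 1 a 1

lemma gev_idE_cons (l' : List (Entry K A)) (a b : A) (ll₂ : List A) :
    gev K A (idE K A :: l') a (b :: ll₂)
      = (a, (gev K A l' b ll₂).1 :: (gev K A l' b ll₂).2) := by
  rw [gev_cons K A (e := idE K A) l' a (b :: ll₂) b ll₂ (by simp [idE]) rfl,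
    show List.take ((idE K A : Entry K A).1 - 1) (b :: ll₂) = [] from rfl, gevC_idE]

lemma gev_replicate (k : ℕ) (a : A) (ll : List A) (h : ll.length = k) :
    gev K A (List.replicate k (idE K A)) a ll = (a, ll) := by
  induction k generalizing a ll with
  | zero => simp [gev]
  | succ k ih =>
    cases ll with
    | nil => simp at h
    | cons b ll₂ =>
      rw [List.replicate_succ, gev_idE_cons, ih b ll₂ (by simpa using h)]

theorem part1_unit (k : ℕ) (f : Tpow K A (k + 1) →ₗ[K] A) :
    gammaD K A k f (List.replicate k (idE K A)) (k + 1) = f := by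
  apply tp_ext
  intro a ll hl
  cases ll with
  | nil => simp at hl
  | cons b ll₂ =>
    rw [gammaD_tp K A k f _ (k + 1) a b ll₂ (by rw [sumA_replicate]) (by simp),
      gev_replicate K A k b ll₂ (by simpa using hl)]

theorem part4_pi :
    gammaD K A 2 (piC K A) [⟨2, piC K A⟩, idE K A] 4 -
        gammaD K A 2 (piC K A) [idE K A, ⟨2, piC K A⟩] 4 = 0 := by
  rw [sub_eq_zero]
  apply tp_ext
  intro a ll hl
  match ll, hl with
  | [x1, x2, x3, x4], _ =>
    rw [gammaD_tp K A 2 (piC K A) _ 4 a x1 [x2, x3, x4]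
        (by simp [sumA, idE]) (by simp),
      gammaD_tp K A 2 (piC K A) _ 4 a x1 [x2, x3, x4]
        (by simp [sumA, idE]) (by simp)]
    simp only [gev, gevC, idE, List.drop, List.take, tmap_self, LinearMap.comp_id,
      innerC_tp, List.cons_append, List.nil_append]
    norm_num
    rw [piC_tp, piC_tp, piC_tp, piC_tp, idC_tp, idC_tp]
    simp [mul_assoc]

lemma one_le_sumA (l : List (Entry K A)) (hne : l ≠ []) (h : ∀ e ∈ l, 1 ≤ e.1) :
    1 ≤ sumA K A l := by
  cases l with
  | nil => simp at hne
  | cons e l' =>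
    have := h e (by simp)
    show 1 ≤ sumA K A l' + e.1
    omega

lemma sumA_eq_zero (l : List (Entry K A)) (h : ∀ e ∈ l, 1 ≤ e.1)
    (h0 : sumA K A l = 0) : l = [] := by
  cases l with
  | nil => rfl
  | cons e l' =>
    have := h e (by simp)
    have h2 : sumA K A l' + e.1 = 0 := h0
    omega

/-- Block values only (no pass-through of the trailing factor). -/
def bv : List (Entry K A) → A → List A → List A
  | [], _, _ => []
  | e :: l', a, ll =>
    gevC K A e a (ll.take (e.1 - 1)) ::
      (match ll.drop (e.1 - 1) with
       | [] => bv l' 0 []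
       | b :: ll₂ => bv l' b ll₂)

lemma bv_length (l : List (Entry K A)) : ∀ a ll, (bv K A l a ll).length = l.length := by
  induction l with
  | nil => intro a ll; rfl
  | cons e l' ih =>
    intro a ll
    rw [bv]
    rcases hd : ll.drop (e.1 - 1) with _ | ⟨b, ll₂⟩ <;> simp [hd, ih]

lemma gev_append (l₁ : List (Entry K A)) (h1 : ∀ e ∈ l₁, 1 ≤ e.1)
    (l₂ : List (Entry K A)) (a : A) (ll₁ : List A) (b : A) (ll₂ : List A)
    (hlen : ll₁.length + 1 = sumA K A l₁) :
    (gev K A (l₁ ++ l₂) a (ll₁ ++ b :: ll₂)).1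
        :: (gev K A (l₁ ++ l₂) a (ll₁ ++ b :: ll₂)).2
      = bv K A l₁ a ll₁ ++ ((gev K A l₂ b ll₂).1 :: (gev K A l₂ b ll₂).2) := by
  induction l₁ generalizing a ll₁ with
  | nil => simp [sumA] at hlen
  | cons e l₁' ih =>
    have he : 1 ≤ e.1 := h1 e (by simp)
    have hs : sumA K A (e :: l₁') = sumA K A l₁' + e.1 := rfl
    rcases hd : ll₁.drop (e.1 - 1) with _ | ⟨b₀, t₂⟩
    · -- second block list is exhausted : l₁' must be empty
      have hle : ll₁.length ≤ e.1 - 1 := List.drop_eq_nil_iff.mp hd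
      have hs0 : sumA K A l₁' = 0 := by omega
      have hnil : l₁' = [] := sumA_eq_zero K A l₁'
        (fun e' he' => h1 e' (by simp [he'])) hs0
      subst hnil
      have hlen' : ll₁.length = e.1 - 1 := by omega
      rw [List.singleton_append,
        gev_cons K A (e := e) l₂ a (ll₁ ++ b :: ll₂) b ll₂ (by omega)
          (by rw [← hlen', List.drop_left]),
        bv]
      simp only [hd]
      rw [bv, ← hlen', List.take_left, List.take_length, List.singleton_append]
    · have hlt : e.1 - 1 < ll₁.length := by
        by_contra hc
        rw [List.drop_eq_nil_iff.2 (by omega)] at hd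
        exact List.cons_ne_nil _ _ hd.symm
      have ht₂ : t₂.length + 1 = sumA K A l₁' := by
        have := congrArg List.length hd
        simp [List.length_drop] at this
        omega
      have hsplit : ll₁ = ll₁.take (e.1 - 1) ++ b₀ :: t₂ := by
        conv_lhs => rw [← List.take_append_drop (e.1 - 1) ll₁]
        rw [hd]
      have hdrop : (ll₁ ++ b :: ll₂).drop (e.1 - 1) = b₀ :: (t₂ ++ b :: ll₂) := by
        rw [List.drop_append_of_le_length (by omega), hd]
        rfl
      have htake : (ll₁ ++ b :: ll₂).take (e.1 - 1) = ll₁.take (e.1 - 1) := by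
        rw [List.take_append_of_le_length (by omega)]
      rw [List.cons_append,
        gev_cons K A (e := e) (l₁' ++ l₂) a (ll₁ ++ b :: ll₂) b₀ (t₂ ++ b :: ll₂)
          (by omega) hdrop,
        htake, bv]
      simp only [hd]
      rw [List.cons_append]
      congr 1
      exact ih (fun e' he' => h1 e' (by simp [he'])) b₀ t₂ ht₂

lemma gevC_comp (E : Entry K A) (Hs : List (Entry K A)) (hE1 : 1 ≤ E.1)
    (hHsl : Hs.length = E.1) (hHsd : ∀ e ∈ Hs, 1 ≤ e.1)
    (a : A) (ll₁ : List A) (h : ll₁.length + 1 = sumA K A Hs)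
    (v₀ : A) (vs : List A) (hbv : bv K A Hs a ll₁ = v₀ :: vs) :
    gevC K A ⟨sumA K A Hs, gammaD K A E.1 E.2 Hs (sumA K A Hs + 1)⟩ a ll₁
      = gevC K A E v₀ vs := by
  have hvs : vs.length = E.1 - 1 := by
    have h2 := bv_length K A Hs a ll₁
    rw [hbv] at h2
    simp at h2
    omega
  have hL : gevC K A ⟨sumA K A Hs, gammaD K A E.1 E.2 Hs (sumA K A Hs + 1)⟩ a ll₁
      = E.2 (tp K A (E.1 + 1) 1 (v₀ :: (vs ++ [1]))) := by
    show innerC K A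
        ((gammaD K A E.1 E.2 Hs (sumA K A Hs + 1)) ∘ₗ
          tmap K A (sumA K A Hs - 1 + 2) (sumA K A Hs + 1))
        (tp K A (sumA K A Hs - 1) a ll₁) = _
    rw [innerC_tp]
    have e1 : ((gammaD K A E.1 E.2 Hs (sumA K A Hs + 1)) ∘ₗ
        tmap K A (sumA K A Hs - 1 + 2) (sumA K A Hs + 1))
        (tp K A (sumA K A Hs - 1 + 2) 1 (a :: (ll₁ ++ [1])))
      = (gammaD K A E.1 E.2 Hs (sumA K A Hs + 1))
          (tmap K A (sumA K A Hs - 1 + 2) (sumA K A Hs + 1)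
            (tp K A (sumA K A Hs - 1 + 2) 1 (a :: (ll₁ ++ [1])))) := rfl
    refine e1.trans ?_
    rw [tmap_tp K A (sumA K A Hs + 1) 1 (by simp; omega),
      gammaD_tp K A E.1 E.2 Hs (sumA K A Hs + 1) 1 a (ll₁ ++ [1]) rfl hHsl]
    congr 2
    have hv := gev_append K A Hs hHsd [] a ll₁ 1 [] h
    rw [List.append_nil, hbv, List.cons_append] at hv
    injection hv with h1 h2
    rw [h1, h2]
    rfl
  have hR : gevC K A E v₀ vs = E.2 (tp K A (E.1 + 1) 1 (v₀ :: (vs ++ [1]))) := by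
    rw [gevC, innerC_tp]
    have e1 : (E.2 ∘ₗ tmap K A (E.1 - 1 + 2) (E.1 + 1))
        (tp K A (E.1 - 1 + 2) 1 (v₀ :: (vs ++ [1])))
      = E.2 (tmap K A (E.1 - 1 + 2) (E.1 + 1)
          (tp K A (E.1 - 1 + 2) 1 (v₀ :: (vs ++ [1])))) := rfl
    refine e1.trans ?_
    rw [tmap_tp K A (E.1 + 1) 1 (by simp; omega)]
  rw [hL, hR]

lemma main2 (pairs : List (Entry K A × List (Entry K A)))
    (hw : ∀ p ∈ pairs, 1 ≤ p.1.1 ∧ p.2.length = p.1.1 ∧ ∀ e ∈ p.2, 1 ≤ e.1)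
    (b : A) (ll : List A)
    (hl : ll.length = sumA K A ((pairs.map Prod.snd).flatten)) :
    gev K A (pairs.map fun p =>
        (⟨sumA K A p.2, gammaD K A p.1.1 p.1.2 p.2 (sumA K A p.2 + 1)⟩ : Entry K A)) b ll
      = gev K A (pairs.map Prod.fst)
          (gev K A ((pairs.map Prod.snd).flatten) b ll).1
          (gev K A ((pairs.map Prod.snd).flatten) b ll).2 := by
  induction pairs generalizing b ll with
  | nil => simp [gev]
  | cons P rest ih =>
    obtain ⟨E, Hs⟩ := P
    obtain ⟨hE1', hHsl', hHsd'⟩ := hw _ List.mem_cons_self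
    replace hE1 : 1 ≤ E.1 := hE1'
    replace hHsl : Hs.length = E.1 := hHsl'
    replace hHsd : ∀ e ∈ Hs, 1 ≤ e.1 := hHsd'
    have hw' : ∀ p ∈ rest, 1 ≤ p.1.1 ∧ p.2.length = p.1.1 ∧ ∀ e ∈ p.2, 1 ≤ e.1 :=
      fun p hp => hw p (List.mem_cons_of_mem _ hp)
    have hHsne : Hs ≠ [] := by
      intro hcon
      rw [hcon] at hHsl
      simp at hHsl
      omega
    have hsum1 : 1 ≤ sumA K A Hs := one_le_sumA K A Hs hHsne hHsd
    have hflat : (((⟨E, Hs⟩ :: rest)).map Prod.snd).flatten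
        = Hs ++ (rest.map Prod.snd).flatten := by simp
    rw [hflat] at hl ⊢
    have hlL : ll.length = sumA K A Hs + sumA K A ((rest.map Prod.snd).flatten) := by
      rw [hl, sumA_append]
    rcases hd : ll.drop (sumA K A Hs - 1) with _ | ⟨b₁, ll₂⟩
    · exfalso
      have := List.drop_eq_nil_iff.mp hd
      omega
    have hll₁len : (ll.take (sumA K A Hs - 1)).length = sumA K A Hs - 1 := by
      simp [List.length_take]
      omega
    have hll₂len : ll₂.length = sumA K A ((rest.map Prod.snd).flatten) := by
      have := congrArg List.length hd
      simp [List.length_drop] at this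
      omega
    have hllsplit : ll = ll.take (sumA K A Hs - 1) ++ b₁ :: ll₂ := by
      conv_lhs => rw [← List.take_append_drop (sumA K A Hs - 1) ll]
      rw [hd]
    -- bv decomposition
    obtain ⟨v₀, vs, hbv⟩ : ∃ v₀ vs,
        bv K A Hs b (ll.take (sumA K A Hs - 1)) = v₀ :: vs := by
      cases Hs with
      | nil => exact absurd rfl hHsne
      | cons e Hs' => exact ⟨_, _, rfl⟩
    have hvs : vs.length = E.1 - 1 := by
      have h2 := bv_length K A Hs b (ll.take (sumA K A Hs - 1))
      rw [hbv] at h2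
      simp at h2
      omega
    -- the inner evaluation
    have hv := gev_append K A Hs hHsd ((rest.map Prod.snd).flatten) b
      (ll.take (sumA K A Hs - 1)) b₁ ll₂ (by omega)
    rw [hbv, List.cons_append, ← hllsplit] at hv
    injection hv with hv1 hv2
    -- left side
    have hLHS : gev K A ((⟨E, Hs⟩ :: rest).map fun p =>
        (⟨sumA K A p.2, gammaD K A p.1.1 p.1.2 p.2 (sumA K A p.2 + 1)⟩ : Entry K A)) b ll
        = (gevC K A ⟨sumA K A Hs, gammaD K A E.1 E.2 Hs (sumA K A Hs + 1)⟩ b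
            (ll.take (sumA K A Hs - 1)),
          (gev K A (rest.map fun p =>
            (⟨sumA K A p.2, gammaD K A p.1.1 p.1.2 p.2 (sumA K A p.2 + 1)⟩ : Entry K A))
              b₁ ll₂).1 ::
          (gev K A (rest.map fun p =>
            (⟨sumA K A p.2, gammaD K A p.1.1 p.1.2 p.2 (sumA K A p.2 + 1)⟩ : Entry K A))
              b₁ ll₂).2) := by
      rw [List.map_cons]
      exact gev_cons K A _ b ll b₁ ll₂ (by simp; omega) (by simpa using hd)
    rw [hLHS]
    -- right side
    rw [show ((⟨E, Hs⟩ :: rest) : List (Entry K A × List (Entry K A))).map Prod.fst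
        = E :: rest.map Prod.fst from rfl]
    rw [gev_cons K A (e := E) (rest.map Prod.fst)
        (gev K A (Hs ++ (rest.map Prod.snd).flatten) b ll).1
        (gev K A (Hs ++ (rest.map Prod.snd).flatten) b ll).2
        (gev K A ((rest.map Prod.snd).flatten) b₁ ll₂).1
        (gev K A ((rest.map Prod.snd).flatten) b₁ ll₂).2
        (by omega)
        (by rw [hv2, show E.1 - 1 = vs.length from hvs.symm, List.drop_left]),
      hv2, show E.1 - 1 = vs.length from hvs.symm, List.take_left, hv1]
    rw [gevC_comp K A E Hs hE1 hHsl hHsd b (ll.take (sumA K A Hs - 1)) (by omega) v₀ vs hbv,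
      ih hw' b₁ ll₂ hll₂len]

lemma flatten_length (pairs : List (Entry K A × List (Entry K A)))
    (hw : ∀ p ∈ pairs, p.2.length = p.1.1) :
    ((pairs.map Prod.snd).flatten).length = sumA K A (pairs.map Prod.fst) := by
  induction pairs with
  | nil => rfl
  | cons P rest ih =>
    have h1 := hw P (by simp)
    have h2 : ∀ p ∈ rest, p.2.length = p.1.1 := fun p hp => hw p (by simp [hp])
    show (P.2 ++ (rest.map Prod.snd).flatten).length
      = sumA K A (rest.map Prod.fst) + P.1.1
    rw [List.length_append, ih h2, h1]
    omega

lemma sumA_map_comp (pairs : List (Entry K A × List (Entry K A))) :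
    sumA K A (pairs.map fun p =>
        (⟨sumA K A p.2, gammaD K A p.1.1 p.1.2 p.2 (sumA K A p.2 + 1)⟩ : Entry K A))
      = sumA K A ((pairs.map Prod.snd).flatten) := by
  induction pairs with
  | nil => rfl
  | cons P rest ih =>
    show sumA K A (rest.map fun p =>
        (⟨sumA K A p.2, gammaD K A p.1.1 p.1.2 p.2 (sumA K A p.2 + 1)⟩ : Entry K A))
          + sumA K A P.2
      = sumA K A (P.2 ++ (rest.map Prod.snd).flatten)
    rw [ih, sumA_append]
    omega

theorem part2_assoc (k : ℕ) (f : Tpow K A (k + 1) →ₗ[K] A)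
    (pairs : List (Entry K A × List (Entry K A))) (hpl : pairs.length = k)
    (hw : ∀ p ∈ pairs, 1 ≤ p.1.1 ∧ p.2.length = p.1.1 ∧ ∀ e ∈ p.2, 1 ≤ e.1) :
    gammaD K A (sumA K A (pairs.map Prod.fst))
        (gammaD K A k f (pairs.map Prod.fst) (sumA K A (pairs.map Prod.fst) + 1))
        ((pairs.map Prod.snd).flatten)
        (sumA K A ((pairs.map Prod.snd).flatten) + 1)
      = gammaD K A k f
          (pairs.map fun p =>
            (⟨sumA K A p.2, gammaD K A p.1.1 p.1.2 p.2 (sumA K A p.2 + 1)⟩ : Entry K A))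
          (sumA K A ((pairs.map Prod.snd).flatten) + 1) := by
  apply tp_ext
  intro a ll hl
  cases ll with
  | nil => simp at hl
  | cons b ll₂ =>
    rw [gammaD_tp K A (sumA K A (pairs.map Prod.fst))
        (gammaD K A k f (pairs.map Prod.fst) (sumA K A (pairs.map Prod.fst) + 1))
        ((pairs.map Prod.snd).flatten) _ a b ll₂ rfl
        (flatten_length K A pairs (fun p hp => (hw p hp).2.1)),
      gammaD_tp K A k f (pairs.map Prod.fst) _ a _ _ rfl
        (by rw [List.length_map, hpl]),
      gammaD_tp K A k f _ _ a b ll₂ (by rw [sumA_map_comp])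
        (by rw [List.length_map, hpl]),
      main2 K A pairs hw b ll₂ (by simpa using hl)]

/-- Split the first `n+1` tensor factors from the last `S+1`. -/
def tsplit (B : Type u) [Ring B] [Algebra K B] : ∀ n S : ℕ,
    Tpow K B (S + n + 1) →ₗ[K] Tpow K B n ⊗[K] Tpow K B S
  | 0, _ => LinearMap.id
  | n + 1, S =>
    (TensorProduct.assoc K B (Tpow K B n) (Tpow K B S)).symm.toLinearMap ∘ₗ
      LinearMap.lTensor B (tsplit B n S)

lemma consume_eq : ∀ (d S : ℕ) (c : Tpow K A d →ₗ[K] A),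
    consume K A d S c = TensorProduct.map c LinearMap.id ∘ₗ tsplit K A d S
  | 0, S, c => by
    erw [show tsplit K A 0 S = LinearMap.id from rfl, LinearMap.comp_id]
    rfl
  | d + 1, S, c => by
    apply TensorProduct.ext'
    intro a t
    have h0 : consume K A (d + 1) S c (a ⊗ₜ[K] t)
        = consume K A d S ((TensorProduct.lcurry (RingHom.id K) A (Tpow K A d) A) c a) t := rfl
    have h1 : (TensorProduct.map c LinearMap.id ∘ₗ tsplit K A (d + 1) S) (a ⊗ₜ[K] t)
        = TensorProduct.map c LinearMap.id
            ((TensorProduct.assoc K A (Tpow K A d) (Tpow K A S)).symm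
              (a ⊗ₜ[K] tsplit K A d S t)) := rfl
    refine h0.trans (Eq.trans ?_ h1.symm)
    erw [consume_eq d S, LinearMap.comp_apply]
    induction tsplit K A d S t using TensorProduct.induction_on with
    | zero => simp; exact (map_zero _).symm
    | tmul u v =>
      simp only [TensorProduct.map_tmul, TensorProduct.assoc_symm_tmul,
        TensorProduct.lcurry_apply]
      rfl
    | add x y hx hy => simp [tmul_add, map_add, hx, hy]; exact (map_add _ _ _).symm

section Hopf

variable (Mo : ModAlg K A H)

/-- The diagonal `X`-action operator `b ↦ tact (Δⁿ b)` on `A^{⊗(n+1)}`. -/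
def TactL (n : ℕ) : H →ₗ[K] Tpow K A n →ₗ[K] Tpow K A n :=
  tact K A H Mo.act n ∘ₗ itComul K H n

lemma TactL_succ (n : ℕ) (b : H) :
    TactL K A H Mo (n + 1) b
      = TensorProduct.homTensorHomMap (RingHom.id K) A (Tpow K A n) A (Tpow K A n)
          ((TensorProduct.map Mo.act (TactL K A H Mo n)) (Coalgebra.comul (R := K) b)) := by
  show TensorProduct.homTensorHomMap (RingHom.id K) A (Tpow K A n) A (Tpow K A n)
      (((TensorProduct.map Mo.act (tact K A H Mo.act n)) ∘ₗ
        (LinearMap.lTensor H (itComul K H n))) (Coalgebra.comul (R := K) b)) = _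
  rw [LinearMap.map_comp_lTensor]
  rfl

lemma hom_map_swap {n m : ℕ} (φ : Tpow K A n →ₗ[K] Tpow K A m)
    (hφ : ∀ c : H, φ ∘ₗ TactL K A H Mo n c = TactL K A H Mo m c ∘ₗ φ) (z : H ⊗[K] H) :
    LinearMap.lTensor A φ ∘ₗ
        TensorProduct.homTensorHomMap (RingHom.id K) A (Tpow K A n) A (Tpow K A n)
          ((TensorProduct.map Mo.act (TactL K A H Mo n)) z)
      = TensorProduct.homTensorHomMap (RingHom.id K) A (Tpow K A m) A (Tpow K A m)
          ((TensorProduct.map Mo.act (TactL K A H Mo m)) z) ∘ₗ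
          LinearMap.lTensor A φ := by
  induction z using TensorProduct.induction_on with
  | zero => simp
  | tmul h c =>
    rw [TensorProduct.map_tmul, TensorProduct.map_tmul,
      TensorProduct.homTensorHomMap_apply, TensorProduct.homTensorHomMap_apply,
      LinearMap.lTensor_comp_map, hφ c, ← LinearMap.map_comp_lTensor]
  | add x y hx hy =>
    simp only [map_add, LinearMap.comp_add, LinearMap.add_comp, hx, hy]

lemma lift_colinear {n m : ℕ} (φ : Tpow K A n →ₗ[K] Tpow K A m)
    (hφ : ∀ c : H, φ ∘ₗ TactL K A H Mo n c = TactL K A H Mo m c ∘ₗ φ) (b : H) :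
    LinearMap.lTensor A φ ∘ₗ TactL K A H Mo (n + 1) b
      = TactL K A H Mo (m + 1) b ∘ₗ LinearMap.lTensor A φ := by
  rw [TactL_succ, TactL_succ]
  exact hom_map_swap K A H Mo φ hφ (Coalgebra.comul (R := K) b)

lemma TactL_zero : TactL K A H Mo 0 = Mo.act := rfl

lemma lmulL_one : ∀ n : ℕ, lmulL K A n (1 : A) = LinearMap.id
  | 0 => by ext a; have h := one_mul (show A from a); exact h
  | n + 1 => by
    have h0 : LinearMap.mul K A 1 = LinearMap.id := by ext a; exact one_mul a
    show LinearMap.rTensor (Tpow K A n) (LinearMap.mul K A 1) = LinearMap.id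
    rw [h0]
    exact LinearMap.rTensor_id _ _

lemma rmulL_one : ∀ n : ℕ, rmulL K A n (1 : A) = LinearMap.id
  | 0 => by ext a; have h := mul_one (show A from a); exact h
  | n + 1 => by
    show LinearMap.lTensor A (rmulL K A n 1) = LinearMap.id
    rw [rmulL_one n]
    exact LinearMap.lTensor_id _ _

lemma xActP_one (n : ℕ) (b : H) :
    xActP K A H Mo.act n 1 1 b = tact K A H Mo.act n (itComul K H n b) := by
  rw [xActP, lmulL_one, rmulL_one, LinearMap.id_comp, LinearMap.id_comp]

lemma TactL_one_tmul (n : ℕ) (b : H) (y : Tpow K A n) :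
    TactL K A H Mo (n + 1) b ((1 : A) ⊗ₜ[K] y)
      = (1 : A) ⊗ₜ[K] TactL K A H Mo n b y := by
  rw [TactL_succ]
  have key : ∀ z : H ⊗[K] H,
      TensorProduct.homTensorHomMap (RingHom.id K) A (Tpow K A n) A (Tpow K A n)
          ((TensorProduct.map Mo.act (TactL K A H Mo n)) z) ((1 : A) ⊗ₜ[K] y)
        = (1 : A) ⊗ₜ[K] TactL K A H Mo n
            ((TensorProduct.lid K H)
              ((LinearMap.rTensor H (Coalgebra.counit (R := K))) z)) y := by
    intro z
    induction z using TensorProduct.induction_on with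
    | zero => simp
    | tmul h c =>
      simp only [TensorProduct.map_tmul, TensorProduct.homTensorHomMap_apply,
        LinearMap.rTensor_tmul, TensorProduct.lid_tmul, map_smul,
        LinearMap.smul_apply, Mo.act_unit]
      rw [TensorProduct.smul_tmul]
    | add x y' hx hy => simp only [map_add, LinearMap.add_apply, hx, hy, tmul_add]
  refine (key (Coalgebra.comul (R := K) b)).trans ?_
  rw [Coalgebra.rTensor_counit_comul, TensorProduct.lid_tmul, one_smul]

lemma TactL_zero_one (c : H) :
    TactL K A H Mo 0 c (1 : A) = Coalgebra.counit (R := K) c • (1 : A) :=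
  Mo.act_unit c

lemma TactL_append_one : ∀ (n : ℕ) (b : H) (y : Tpow K A n),
    TactL K A H Mo (n + 1) b (appendA K A n 1 y)
      = appendA K A n 1 (TactL K A H Mo n b y)
  | 0, b, y => by
    rw [TactL_succ]
    have key : ∀ z : H ⊗[K] H,
        TensorProduct.homTensorHomMap (RingHom.id K) A (Tpow K A 0) A (Tpow K A 0)
            ((TensorProduct.map Mo.act (TactL K A H Mo 0)) z) (y ⊗ₜ[K] (1 : A))
          = Mo.act ((TensorProduct.rid K H)
              ((LinearMap.lTensor H (Coalgebra.counit (R := K))) z)) y ⊗ₜ[K] (1 : A) := by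
      intro z
      induction z using TensorProduct.induction_on with
      | zero => simp; exact (TensorProduct.zero_tmul A (1 : A)).symm
      | tmul h c =>
        simp only [TensorProduct.map_tmul, TensorProduct.homTensorHomMap_apply,
          LinearMap.lTensor_tmul, TensorProduct.rid_tmul, map_smul,
          LinearMap.smul_apply]
        show Mo.act h y ⊗ₜ[K] TactL K A H Mo 0 c (1 : A) = _
        rw [TactL_zero_one]
        exact (TensorProduct.tmul_smul _ _ _).trans (TensorProduct.smul_tmul' _ _ _)
      | add x y' hx hy => simp only [map_add, LinearMap.add_apply, hx, hy, add_tmul]; exact (TensorProduct.add_tmul _ _ _).symm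
    have h1 : appendA K A 0 (1 : A) y = y ⊗ₜ[K] (1 : A) := rfl
    rw [h1]
    refine (key (Coalgebra.comul (R := K) b)).trans ?_
    rw [Coalgebra.lTensor_counit_comul, TensorProduct.rid_tmul, one_smul]
    rfl
  | n + 1, b, y => by
    rw [TactL_succ]
    induction y using TensorProduct.induction_on with
    | zero => erw [map_zero, map_zero, map_zero]
    | tmul a y' =>
      have h1 : appendA K A (n + 1) 1 (a ⊗ₜ[K] y') = a ⊗ₜ[K] appendA K A n 1 y' := rfl
      rw [h1]
      have key : ∀ z : H ⊗[K] H,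
          TensorProduct.homTensorHomMap (RingHom.id K) A (Tpow K A (n + 1)) A (Tpow K A (n + 1))
              ((TensorProduct.map Mo.act (TactL K A H Mo (n + 1))) z)
              (a ⊗ₜ[K] appendA K A n 1 y')
            = LinearMap.lTensor A (appendA K A n 1)
                (TensorProduct.homTensorHomMap (RingHom.id K) A (Tpow K A n) A (Tpow K A n)
                  ((TensorProduct.map Mo.act (TactL K A H Mo n)) z) (a ⊗ₜ[K] y')) := by
        intro z
        induction z using TensorProduct.induction_on with
        | zero => simp
        | tmul h c =>
          simp only [TensorProduct.map_tmul, TensorProduct.homTensorHomMap_apply]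
          rw [TactL_append_one n c y']
          rfl
        | add x y'' hx hy => simp only [map_add, LinearMap.add_apply, hx, hy]
      refine (key (Coalgebra.comul (R := K) b)).trans ?_
      rw [← TactL_succ]
      rfl
    | add u v hu hv =>
      erw [map_add (appendA K A (n + 1) 1) u v, map_add, hu, hv, map_add, map_add]
  termination_by n => n

lemma innerC_equivariant (d : ℕ) (g : Tpow K A (d + 2) →ₗ[K] A)
    (hg : IsXLinear K A H Mo.act (d + 1) g) (b : H) :
    innerC K A g ∘ₗ TactL K A H Mo d b = Mo.act b ∘ₗ innerC K A g := by
  apply LinearMap.ext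
  intro u
  have h1 : (innerC K A g ∘ₗ TactL K A H Mo d b) u
      = g ((1 : A) ⊗ₜ[K] (appendA K A d 1 (TactL K A H Mo d b u))) := rfl
  erw [h1, ← TactL_append_one, ← TactL_one_tmul]
  have h2 := hg 1 1 b ((1 : A) ⊗ₜ[K] (appendA K A d 1 u))
  rw [show xActP K A H Mo.act (d + 1 + 1) 1 1 b
      = lmulL K A (d + 2) 1 ∘ₗ rmulL K A (d + 2) 1 ∘ₗ
        tact K A H Mo.act (d + 2) (itComul K H (d + 2) b) from rfl,
    lmulL_one, rmulL_one, LinearMap.id_comp, LinearMap.id_comp] at h2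
  rw [show (TactL K A H Mo (d + 2) b) ((1:A) ⊗ₜ[K] appendA K A d 1 u)
      = (tact K A H Mo.act (d + 2) (itComul K H (d + 2) b))
          ((1:A) ⊗ₜ[K] appendA K A d 1 u) from rfl, h2, one_mul, mul_one]
  rfl

end Hopf

lemma itComul_split : ∀ (n S : ℕ),
    tsplit K H n S ∘ₗ itComul K H (S + n + 1)
      = TensorProduct.map (itComul K H n) (itComul K H S) ∘ₗ Coalgebra.comul (R := K)
  | 0, S => by
    erw [show tsplit K H 0 S = LinearMap.id from rfl, LinearMap.id_comp]
  | n + 1, S => by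
    have e1 : tsplit K H (n + 1) S ∘ₗ itComul K H (S + (n + 1) + 1)
        = (TensorProduct.assoc K H (Tpow K H n) (Tpow K H S)).symm.toLinearMap ∘ₗ
          (LinearMap.lTensor H (tsplit K H n S ∘ₗ itComul K H (S + n + 1)) ∘ₗ
            Coalgebra.comul (R := K)) := by
      rw [LinearMap.lTensor_comp]
      rfl
    rw [e1, itComul_split n S, LinearMap.lTensor_comp, LinearMap.comp_assoc,
      ← Coalgebra.coassoc (R := K) (A := H),
      show LinearMap.lTensor H
          (TensorProduct.map (itComul K H n) (itComul K H S))
        = TensorProduct.map LinearMap.id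
            (TensorProduct.map (itComul K H n) (itComul K H S)) from rfl,
      ← LinearMap.comp_assoc _ _ (TensorProduct.map LinearMap.id
          (TensorProduct.map (itComul K H n) (itComul K H S))),
      TensorProduct.map_map_comp_assoc_eq, LinearMap.comp_assoc, ← LinearMap.comp_assoc
        _ _ ((TensorProduct.assoc K H (Tpow K H n) (Tpow K H S)).symm.toLinearMap),
      show (TensorProduct.assoc K H (Tpow K H n) (Tpow K H S)).symm.toLinearMap ∘ₗ
          (TensorProduct.assoc K H (Tpow K H n) (Tpow K H S)).toLinearMap
        = LinearMap.id from
        LinearMap.ext fun x =>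
          (TensorProduct.assoc K H (Tpow K H n) (Tpow K H S)).symm_apply_apply x,
      LinearMap.id_comp, ← LinearMap.comp_assoc, LinearMap.map_comp_rTensor]
    rfl

lemma tsplit_rmul : ∀ (d S : ℕ) (a' : A),
    tsplit K A d S ∘ₗ rmulL K A (S + d + 1) a'
      = TensorProduct.map LinearMap.id (rmulL K A S a') ∘ₗ tsplit K A d S
  | 0, S, a' => by
    exact LinearMap.ext fun _ => rfl
  | d + 1, S, a' => by
    have e1 : tsplit K A (d + 1) S ∘ₗ rmulL K A (S + (d + 1) + 1) a'
        = (TensorProduct.assoc K A (Tpow K A d) (Tpow K A S)).symm.toLinearMap ∘ₗ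
          LinearMap.lTensor A (tsplit K A d S ∘ₗ rmulL K A (S + d + 1) a') := by
      rw [LinearMap.lTensor_comp]
      rfl
    rw [e1, tsplit_rmul d S a', LinearMap.lTensor_comp,
      show LinearMap.lTensor A (TensorProduct.map LinearMap.id (rmulL K A S a'))
        = TensorProduct.map LinearMap.id
            (TensorProduct.map LinearMap.id (rmulL K A S a')) from rfl,
      ← LinearMap.comp_assoc, ← TensorProduct.map_map_comp_assoc_symm_eq,
      TensorProduct.map_id, LinearMap.comp_assoc]
    rfl

section Hopf2

variable (Mo : ModAlg K A H)

lemma helperB (n S : ℕ) (h : H) (E : Tpow K H n ⊗[K] Tpow K H S) :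
    (TensorProduct.assoc K A (Tpow K A n) (Tpow K A S)).symm.toLinearMap ∘ₗ
        TensorProduct.map (Mo.act h)
          (TensorProduct.homTensorHomMap (RingHom.id K) (Tpow K A n) (Tpow K A S)
            (Tpow K A n) (Tpow K A S)
            ((TensorProduct.map (tact K A H Mo.act n) (tact K A H Mo.act S)) E))
      = TensorProduct.homTensorHomMap (RingHom.id K) (Tpow K A (n + 1)) (Tpow K A S)
          (Tpow K A (n + 1)) (Tpow K A S)
          ((TensorProduct.map (tact K A H Mo.act (n + 1)) (tact K A H Mo.act S))
            ((TensorProduct.assoc K H (Tpow K H n) (Tpow K H S)).symm (h ⊗ₜ[K] E)))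
        ∘ₗ (TensorProduct.assoc K A (Tpow K A n) (Tpow K A S)).symm.toLinearMap := by
  induction E using TensorProduct.induction_on with
  | zero => simp; erw [map_zero]; exact (LinearMap.zero_comp _).symm
  | tmul u v =>
    exact TensorProduct.ext_threefold' fun _ _ _ => rfl
  | add x y hx hy =>
    simp only [map_add, tmul_add, TensorProduct.map_add_right,
      TensorProduct.map_add_left, LinearMap.comp_add, LinearMap.add_comp, hx, hy]
    erw [map_add, map_add, LinearMap.add_comp]
    rfl

lemma tact_tsplit : ∀ (n S : ℕ) (z : Tpow K H (S + n + 1)),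
    tsplit K A n S ∘ₗ tact K A H Mo.act (S + n + 1) z
      = TensorProduct.homTensorHomMap (RingHom.id K) (Tpow K A n) (Tpow K A S)
          (Tpow K A n) (Tpow K A S)
          ((TensorProduct.map (tact K A H Mo.act n) (tact K A H Mo.act S))
            (tsplit K H n S z))
        ∘ₗ tsplit K A n S
  | 0, S, z => by
    exact LinearMap.ext fun _ => rfl
  | n + 1, S, z => by
    induction z using TensorProduct.induction_on with
    | zero => erw [map_zero, map_zero]; exact (LinearMap.comp_zero _).trans (LinearMap.zero_comp _).symm
    | tmul h w =>
      have e1 : tsplit K A (n + 1) S ∘ₗ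
            tact K A H Mo.act (S + (n + 1) + 1) (h ⊗ₜ[K] w)
          = (TensorProduct.assoc K A (Tpow K A n) (Tpow K A S)).symm.toLinearMap ∘ₗ
            (LinearMap.lTensor A (tsplit K A n S) ∘ₗ
              TensorProduct.map (Mo.act h) (tact K A H Mo.act (S + n + 1) w)) := rfl
      rw [e1, LinearMap.lTensor_comp_map, tact_tsplit n S w,
        show TensorProduct.map (Mo.act h)
            (TensorProduct.homTensorHomMap (RingHom.id K) (Tpow K A n) (Tpow K A S)
              (Tpow K A n) (Tpow K A S)
              ((TensorProduct.map (tact K A H Mo.act n) (tact K A H Mo.act S))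
                (tsplit K H n S w)) ∘ₗ tsplit K A n S)
          = TensorProduct.map (Mo.act h)
              (TensorProduct.homTensorHomMap (RingHom.id K) (Tpow K A n) (Tpow K A S)
                (Tpow K A n) (Tpow K A S)
                ((TensorProduct.map (tact K A H Mo.act n) (tact K A H Mo.act S))
                  (tsplit K H n S w))) ∘ₗ
              LinearMap.lTensor A (tsplit K A n S) from
          (LinearMap.map_comp_lTensor _ _ _ _).symm,
        ← LinearMap.comp_assoc, helperB K A H Mo n S h (tsplit K H n S w)]
      exact LinearMap.ext fun _ => rfl
    | add x y hx hy =>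
      erw [map_add, map_add, map_add, map_add, LinearMap.comp_add, LinearMap.add_comp, hx, hy]

lemma TactL_split (d S : ℕ) (b : H) :
    tsplit K A d S ∘ₗ TactL K A H Mo (S + d + 1) b
      = TensorProduct.homTensorHomMap (RingHom.id K) (Tpow K A d) (Tpow K A S)
          (Tpow K A d) (Tpow K A S)
          ((TensorProduct.map (TactL K A H Mo d) (TactL K A H Mo S))
            (Coalgebra.comul (R := K) b))
        ∘ₗ tsplit K A d S := by
  have h1 : TactL K A H Mo (S + d + 1) b
      = tact K A H Mo.act (S + d + 1) (itComul K H (S + d + 1) b) := rfl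
  rw [h1, tact_tsplit]
  congr 2
  have h2 := LinearMap.congr_fun (itComul_split K H d S) b
  rw [show tsplit K H d S (itComul K H (S + d + 1) b)
      = (tsplit K H d S ∘ₗ itComul K H (S + d + 1)) b from rfl, itComul_split K H d S]
  exact (LinearMap.congr_fun
    (TensorProduct.map_comp (tact K A H Mo.act d) (tact K A H Mo.act S)
      (itComul K H d) (itComul K H S)) (Coalgebra.comul (R := K) b)).symm

lemma consume_colinear (d S : ℕ) (c : Tpow K A d →ₗ[K] A)
    (hc : ∀ β : H, c ∘ₗ TactL K A H Mo d β = Mo.act β ∘ₗ c) (b : H) :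
    consume K A d S c ∘ₗ TactL K A H Mo (S + d + 1) b
      = TactL K A H Mo (S + 1) b ∘ₗ consume K A d S c := by
  rw [consume_eq, LinearMap.comp_assoc, TactL_split, ← LinearMap.comp_assoc]
  have key : ∀ z : H ⊗[K] H,
      TensorProduct.map c LinearMap.id ∘ₗ
          TensorProduct.homTensorHomMap (RingHom.id K) (Tpow K A d) (Tpow K A S)
            (Tpow K A d) (Tpow K A S)
            ((TensorProduct.map (TactL K A H Mo d) (TactL K A H Mo S)) z)
        = TensorProduct.homTensorHomMap (RingHom.id K) A (Tpow K A S) A (Tpow K A S)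
            ((TensorProduct.map Mo.act (TactL K A H Mo S)) z) ∘ₗ
            TensorProduct.map c LinearMap.id := by
    intro z
    induction z using TensorProduct.induction_on with
    | zero => simp
    | tmul h β =>
      rw [TensorProduct.map_tmul, TensorProduct.homTensorHomMap_apply,
        TensorProduct.map_tmul, TensorProduct.homTensorHomMap_apply,
        ← TensorProduct.map_comp, hc h, ← TensorProduct.map_comp,
        LinearMap.comp_id, LinearMap.id_comp]
    | add x y hx hy =>
      simp only [map_add, LinearMap.comp_add, LinearMap.add_comp, hx, hy]
  rw [key (Coalgebra.comul (R := K) b), LinearMap.comp_assoc, ← TactL_succ]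
  rfl

lemma gammaAux_colinear : ∀ (l : List (Entry K A)),
    (∀ e ∈ l, 1 ≤ e.1 ∧ IsXLinear K A H Mo.act e.1 e.2) → ∀ b : H,
    gammaAux K A l ∘ₗ TactL K A H Mo (sumA K A l) b
      = TactL K A H Mo l.length b ∘ₗ gammaAux K A l
  | [], _, b => by
    rw [show gammaAux K A ([] : List (Entry K A)) = LinearMap.id from rfl,
      LinearMap.id_comp, LinearMap.comp_id]
    rfl
  | ⟨0, g⟩ :: l', hent, b => by
    exact absurd (hent ⟨0, g⟩ (by simp)).1 (by simp)
  | ⟨d + 1, g⟩ :: l', hent, b => by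
    have hg : IsXLinear K A H Mo.act (d + 1) g := (hent ⟨d + 1, g⟩ (by simp)).2
    have hent' : ∀ e ∈ l', 1 ≤ e.1 ∧ IsXLinear K A H Mo.act e.1 e.2 :=
      fun e he => hent e (by simp [he])
    show (LinearMap.lTensor A (gammaAux K A l') ∘ₗ
          consume K A d (sumA K A l') (innerC K A g)) ∘ₗ
        TactL K A H Mo (sumA K A l' + d + 1) b
      = TactL K A H Mo (l'.length + 1) b ∘ₗ
        (LinearMap.lTensor A (gammaAux K A l') ∘ₗ
          consume K A d (sumA K A l') (innerC K A g))
    rw [LinearMap.comp_assoc,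
      consume_colinear K A H Mo d (sumA K A l') (innerC K A g)
        (innerC_equivariant K A H Mo d g hg) b]
    exact LinearMap.ext fun _ => LinearMap.congr_fun (lift_colinear K A H Mo (gammaAux K A l')
        (gammaAux_colinear l' hent') b) _

lemma gammaAux_rmul : ∀ (l : List (Entry K A)) (a' : A),
    gammaAux K A l ∘ₗ rmulL K A (sumA K A l) a'
      = rmulL K A l.length a' ∘ₗ gammaAux K A l
  | [], a' => by
    rw [show gammaAux K A ([] : List (Entry K A)) = LinearMap.id from rfl,
      LinearMap.id_comp, LinearMap.comp_id]
    rfl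
  | ⟨0, g⟩ :: l', a' => by
    rw [show gammaAux K A (⟨0, g⟩ :: l') = 0 from rfl, LinearMap.zero_comp,
      LinearMap.comp_zero]
  | ⟨d + 1, g⟩ :: l', a' => by
    show (LinearMap.lTensor A (gammaAux K A l') ∘ₗ
          consume K A d (sumA K A l') (innerC K A g)) ∘ₗ
        rmulL K A (sumA K A l' + d + 1) a'
      = rmulL K A (l'.length + 1) a' ∘ₗ
        (LinearMap.lTensor A (gammaAux K A l') ∘ₗ
          consume K A d (sumA K A l') (innerC K A g))
    rw [consume_eq,
      LinearMap.comp_assoc (rmulL K A (sumA K A l' + d + 1) a')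
        (TensorProduct.map (innerC K A g) LinearMap.id ∘ₗ tsplit K A d (sumA K A l'))
        (LinearMap.lTensor A (gammaAux K A l')),
      LinearMap.comp_assoc (rmulL K A (sumA K A l' + d + 1) a')
        (tsplit K A d (sumA K A l'))
        (TensorProduct.map (innerC K A g) LinearMap.id),
      tsplit_rmul K A d (sumA K A l') a',
      ← LinearMap.comp_assoc (tsplit K A d (sumA K A l'))
        (TensorProduct.map LinearMap.id (rmulL K A (sumA K A l') a'))
        (TensorProduct.map (innerC K A g) LinearMap.id),
      ← TensorProduct.map_comp, LinearMap.comp_id, LinearMap.id_comp,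
      ← LinearMap.comp_assoc (tsplit K A d (sumA K A l'))
        (TensorProduct.map (innerC K A g) (rmulL K A (sumA K A l') a'))
        (LinearMap.lTensor A (gammaAux K A l')),
      LinearMap.lTensor_comp_map, gammaAux_rmul l' a',
      show rmulL K A (l'.length + 1) a'
        = LinearMap.lTensor A (rmulL K A l'.length a') from rfl]
    refine LinearMap.ext fun x => ?_
    exact (LinearMap.congr_fun (TensorProduct.map_comp LinearMap.id (rmulL K A l'.length a')
        (innerC K A g) (gammaAux K A l')) _).trans
      (congrArg (LinearMap.lTensor A (rmulL K A l'.length a'))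
        (LinearMap.congr_fun (TensorProduct.map_comp LinearMap.id (gammaAux K A l')
          (innerC K A g) LinearMap.id) _))

theorem part3_xlinear (k : ℕ) (f : Tpow K A (k + 1) →ₗ[K] A)
    (hf : IsXLinear K A H Mo.act k f) (l : List (Entry K A)) (hl : l.length = k)
    (hent : ∀ e ∈ l, 1 ≤ e.1 ∧ IsXLinear K A H Mo.act e.1 e.2) :
    IsXLinear K A H Mo.act (sumA K A l) (gammaD K A k f l (sumA K A l + 1)) := by
  subst hl
  intro a a' b t
  rw [gammaD, tmap_self, tmap_self, LinearMap.comp_id, LinearMap.comp_id, gamma]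
  have e3 : LinearMap.lTensor A (gammaAux K A l) ∘ₗ lmulL K A (sumA K A l + 1) a
      = lmulL K A (l.length + 1) a ∘ₗ LinearMap.lTensor A (gammaAux K A l) := by
    show LinearMap.lTensor A (gammaAux K A l) ∘ₗ
        LinearMap.rTensor (Tpow K A (sumA K A l)) (LinearMap.mul K A a)
      = LinearMap.rTensor (Tpow K A l.length) (LinearMap.mul K A a) ∘ₗ
        LinearMap.lTensor A (gammaAux K A l)
    rw [LinearMap.lTensor_comp_rTensor, LinearMap.rTensor_comp_lTensor]
  have e4 : LinearMap.lTensor A (gammaAux K A l) ∘ₗ rmulL K A (sumA K A l + 1) a'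
      = rmulL K A (l.length + 1) a' ∘ₗ LinearMap.lTensor A (gammaAux K A l) := by
    show LinearMap.lTensor A (gammaAux K A l) ∘ₗ
        LinearMap.lTensor A (rmulL K A (sumA K A l) a')
      = LinearMap.lTensor A (rmulL K A l.length a') ∘ₗ
        LinearMap.lTensor A (gammaAux K A l)
    rw [← LinearMap.lTensor_comp, gammaAux_rmul K A l a', LinearMap.lTensor_comp]
  have e5 : LinearMap.lTensor A (gammaAux K A l) ∘ₗ TactL K A H Mo (sumA K A l + 1) b
      = TactL K A H Mo (l.length + 1) b ∘ₗ LinearMap.lTensor A (gammaAux K A l) :=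
    lift_colinear K A H Mo (gammaAux K A l) (gammaAux_colinear K A H Mo l hent) b
  have p3 := LinearMap.congr_fun e3
  have p4 := LinearMap.congr_fun e4
  have p5 := LinearMap.congr_fun e5
  have happ : (f ∘ₗ LinearMap.lTensor A (gammaAux K A l))
      (xActP K A H Mo.act (sumA K A l + 1) a a' b t)
      = f (xActP K A H Mo.act (l.length + 1) a a' b
          (LinearMap.lTensor A (gammaAux K A l) t)) := by
    show f (LinearMap.lTensor A (gammaAux K A l)
        (lmulL K A (sumA K A l + 1) a (rmulL K A (sumA K A l + 1) a'
          (TactL K A H Mo (sumA K A l + 1) b t))))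
      = f (lmulL K A (l.length + 1) a (rmulL K A (l.length + 1) a'
          (TactL K A H Mo (l.length + 1) b
            (LinearMap.lTensor A (gammaAux K A l) t))))
    exact congrArg f ((p3 _).trans (congrArg (fun x => lmulL K A (l.length + 1) a x)
      ((p4 _).trans (congrArg (fun x => rmulL K A (l.length + 1) a' x) (p5 t)))))
  refine happ.trans ?_
  rw [hf a a' b (LinearMap.lTensor A (gammaAux K A l) t)]
  rfl

end Hopf2

end AuxMachinery

/-- The Hopf-Hochschild cochain modules `C(n) = Hom_X(A^{⊗(n+2)}, A)`
with structure maps `γ` and identity `Id` form a non-symmetric operad (unit law and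
associativity), `π` is a multiplication on this operad, and hence the graded vector space
`CH*_Hopf(A, A)` with the induced brace operations is a brace algebra with multiplication
`π`, i.e. `π{π} = γ(π; π, Id) − γ(π; Id, π) = 0`. -/
theorem hopf_hochschild_operad_with_multiplication_and_brace
    {K A H : Type u} [Field K] [Ring A] [Algebra K A] [Ring H] [Bialgebra K H]
    (M : ModAlg K A H) :
    -- unit law of the operad
    (∀ (k : ℕ), 1 ≤ k → ∀ f : Tpow K A (k + 1) →ₗ[K] A,
      gammaD K A k f (List.replicate k (idE K A)) (k + 1) = f) ∧
    -- associativity of the operad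
    (∀ (k : ℕ), 1 ≤ k → ∀ f : Tpow K A (k + 1) →ₗ[K] A, IsXLinear K A H M.act k f →
      ∀ pairs : List (Entry K A × List (Entry K A)), pairs.length = k →
        (∀ p ∈ pairs, 1 ≤ p.1.1 ∧ p.2.length = p.1.1 ∧
          IsXLinear K A H M.act p.1.1 p.1.2 ∧
          ∀ e ∈ p.2, 1 ≤ e.1 ∧ IsXLinear K A H M.act e.1 e.2) →
        gammaD K A (sumA K A (pairs.map Prod.fst))
            (gammaD K A k f (pairs.map Prod.fst) (sumA K A (pairs.map Prod.fst) + 1))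
            ((pairs.map Prod.snd).flatten)
            (sumA K A ((pairs.map Prod.snd).flatten) + 1) =
          gammaD K A k f
            (pairs.map fun p =>
              (⟨sumA K A p.2, gammaD K A p.1.1 p.1.2 p.2 (sumA K A p.2 + 1)⟩ : Entry K A))
            (sumA K A ((pairs.map Prod.snd).flatten) + 1)) ∧
    -- γ preserves X-linearity (the operad is an operad of Hopf-Hochschild cochains)
    (∀ (k : ℕ), 1 ≤ k → ∀ f : Tpow K A (k + 1) →ₗ[K] A, IsXLinear K A H M.act k f →
      ∀ l : List (Entry K A), l.length = k →
        (∀ e ∈ l, 1 ≤ e.1 ∧ IsXLinear K A H M.act e.1 e.2) →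
        IsXLinear K A H M.act (sumA K A l) (gammaD K A k f l (sumA K A l + 1))) ∧
    -- π is a multiplication, i.e. π{π} = 0 in the induced brace algebra
    gammaD K A 2 (piC K A) [⟨2, piC K A⟩, idE K A] 4 -
        gammaD K A 2 (piC K A) [idE K A, ⟨2, piC K A⟩] 4 = 0 := by
  refine ⟨fun k _ f => part1_unit K A k f, ?_, ?_, part4_pi K A⟩
  · intro k _ f _ pairs hpl hw
    exact part2_assoc K A k f pairs hpl
      (fun p hp => ⟨(hw p hp).1, (hw p hp).2.1,
        fun e he => ((hw p hp).2.2.2 e he).1⟩)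
  · intro k _ f hf l hl hent
    exact part3_xlinear K A H M k f hf l hl hent
end

section
/- The bracket [ψ, φ](a₀ ⊗ a₁ ⊗ a₂) = ψ(a₀ ⊗ φ(1 ⊗ a₁ ⊗ 1) ⊗ a₂) − φ(a₀ ⊗ ψ(1 ⊗ a₁ ⊗ 1) ⊗ a₂) makes CH¹_Hopf(A,A) ∩ ker(d) (the degree-1 Hopf-Hochschild cocycles) into a Lie algebra over K, i.e., the bracket is bilinear, antisymmetric, preserves cocycles, and satisfies the Jacobi identity. -/
open TensorProduct

noncomputable section HGDefs

universe v

variable (K A : Type v) [Field K] [Ring A] [Algebra K A]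

/-- The homotopy-G-algebra differential `d(f) = π{f} − (−1)^{|f|} f{π}` on degree-`n`
Hopf-Hochschild cochains, written out via the operad structure maps and the sign
conventions of Gerstenhaber–Voronov (`|f| = n − 1`). -/
def hgDiff (n : ℕ) (f : Tpow K A (n + 1) →ₗ[K] A) : Tpow K A (n + 2) →ₗ[K] A :=
  (gammaD K A 2 (piC K A) [⟨n, f⟩, idE K A] (n + 2) +
      (-1 : K) ^ (n - 1) • gammaD K A 2 (piC K A) [idE K A, ⟨n, f⟩] (n + 2)) -
    (-1 : K) ^ (n - 1) •
      ∑ i ∈ Finset.range n, (-1 : K) ^ i •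
        gammaD K A n f
          (List.replicate i (idE K A) ++
            ⟨2, piC K A⟩ :: List.replicate (n - 1 - i) (idE K A)) (n + 2)

/-- The cup product `ψ ∪ φ = (−1)^{m+n−1} γ(π; ψ, φ)` of Hopf-Hochschild cochains of
degrees `m` and `n`. -/
def cup (m n : ℕ) (ψ : Tpow K A (m + 1) →ₗ[K] A) (φ : Tpow K A (n + 1) →ₗ[K] A) :
    Tpow K A (m + n + 1) →ₗ[K] A :=
  (-1 : K) ^ (m + n - 1) • gammaD K A 2 (piC K A) [⟨m, ψ⟩, ⟨n, φ⟩] (m + n + 1)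

/-- The brace operation `ψ{φ} = ∑_{i=1}^m (−1)^{(i−1)(n−1)} γ(ψ; Id^{i−1}, φ, Id^{m−i})`
of Hopf-Hochschild cochains of degrees `m` and `n`. -/
def braceOne (m n : ℕ) (ψ : Tpow K A (m + 1) →ₗ[K] A) (φ : Tpow K A (n + 1) →ₗ[K] A) :
    Tpow K A (m + n) →ₗ[K] A :=
  ∑ i ∈ Finset.range m, (-1 : K) ^ ((n - 1) * i) •
    gammaD K A m ψ
      (List.replicate i (idE K A) ++ ⟨n, φ⟩ :: List.replicate (m - 1 - i) (idE K A))
      (m + n)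

/-- The Gerstenhaber bracket `[ψ, φ] = ψ{φ} − (−1)^{(m−1)(n−1)} φ{ψ}`. -/
def bracketC (m n : ℕ) (ψ : Tpow K A (m + 1) →ₗ[K] A) (φ : Tpow K A (n + 1) →ₗ[K] A) :
    Tpow K A (m + n) →ₗ[K] A :=
  braceOne K A m n ψ φ -
    (-1 : K) ^ ((m - 1) * (n - 1)) • (braceOne K A n m φ ψ ∘ₗ tmap K A (m + n) (n + m))

/-- The bracket `[ψ, φ](a₀ ⊗ a₁ ⊗ a₂) = ψ(a₀ ⊗ φ(1 ⊗ a₁ ⊗ 1) ⊗ a₂) − φ(a₀ ⊗ ψ(1 ⊗ a₁ ⊗ 1) ⊗ a₂)`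
on degree-1 Hopf-Hochschild cochains. -/
def bracket1 (ψ φ : Tpow K A 2 →ₗ[K] A) : Tpow K A 2 →ₗ[K] A :=
  ψ ∘ₗ (LinearMap.lTensor A (LinearMap.rTensor A (innerC K A φ)) : Tpow K A 2 →ₗ[K] Tpow K A 2) -
    φ ∘ₗ (LinearMap.lTensor A (LinearMap.rTensor A (innerC K A ψ)) : Tpow K A 2 →ₗ[K] Tpow K A 2)


/-- Pure tensor in `A^{⊗3}`. -/
def pt3 (a b c : A) : Tpow K A 2 := a ⊗ₜ[K] (b ⊗ₜ[K] c)

/-- Pure tensor in `A^{⊗4}`. -/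
def pt4 (a b c d : A) : Tpow K A 3 := a ⊗ₜ[K] (b ⊗ₜ[K] (c ⊗ₜ[K] d))

/-- The map `a₀ ⊗ a₁ ⊗ a₂ ↦ a₀ ⊗ f(a₁) ⊗ a₂`. -/
def Lf (f : Tpow K A 0 →ₗ[K] A) : Tpow K A 2 →ₗ[K] Tpow K A 2 :=
  LinearMap.lTensor A (LinearMap.rTensor A f)

noncomputable section AuxBracket

universe u

variable {K A H : Type u} [Field K] [Ring A] [Algebra K A] [Ring H] [Bialgebra K H]

lemma tpow2_ext {B N : Type u} [Ring B] [Algebra K B] [AddCommGroup N] [Module K N]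
    {f g : Tpow K B 2 →ₗ[K] N}
    (h : ∀ a₀ a₁ a₂ : B, f (pt3 K B a₀ a₁ a₂) = g (pt3 K B a₀ a₁ a₂)) :
    f = g := by
  apply TensorProduct.ext'
  intro a u
  have key : f ∘ₗ TensorProduct.mk K B (Tpow K B 1) a = g ∘ₗ TensorProduct.mk K B (Tpow K B 1) a :=
    TensorProduct.ext' fun b c => h a b c
  exact LinearMap.congr_fun key u

lemma tpow3_ext {N : Type u} [AddCommGroup N] [Module K N]
    {f g : Tpow K A 3 →ₗ[K] N}
    (h : ∀ x₀ x₁ x₂ x₃ : A, f (pt4 K A x₀ x₁ x₂ x₃) = g (pt4 K A x₀ x₁ x₂ x₃)) :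
    f = g := by
  apply TensorProduct.ext'
  intro a u
  have key : f ∘ₗ TensorProduct.mk K A (Tpow K A 2) a = g ∘ₗ TensorProduct.mk K A (Tpow K A 2) a :=
    tpow2_ext fun b c d => h a b c d
  exact LinearMap.congr_fun key u

lemma innerC_apply (g : Tpow K A 2 →ₗ[K] A) (a : A) :
    innerC K A g a = g ((1:A) ⊗ₜ[K] (a ⊗ₜ[K] (1:A))) := rfl

lemma bracket1_apply (ψ φ : Tpow K A 2 →ₗ[K] A) (a₀ a₁ a₂ : A) :
    bracket1 K A ψ φ (a₀ ⊗ₜ[K] (a₁ ⊗ₜ[K] a₂)) =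
      ψ (a₀ ⊗ₜ[K] (innerC K A φ a₁ ⊗ₜ[K] a₂)) -
        φ (a₀ ⊗ₜ[K] (innerC K A ψ a₁ ⊗ₜ[K] a₂)) := rfl

lemma innerC_add_arg (g : Tpow K A 2 →ₗ[K] A) (x y : A) :
    innerC K A g (x + y) = innerC K A g x + innerC K A g y := map_add _ _ _

lemma innerC_sub_arg (g : Tpow K A 2 →ₗ[K] A) (x y : A) :
    innerC K A g (x - y) = innerC K A g x - innerC K A g y := map_sub _ _ _

lemma innerC_smul_arg (g : Tpow K A 2 →ₗ[K] A) (r : K) (x : A) :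
    innerC K A g (r • x) = r • innerC K A g x := map_smul _ _ _

lemma bracket1_t3 (ψ φ : Tpow K A 2 →ₗ[K] A) (a₀ a₁ a₂ : A) :
    bracket1 K A ψ φ (pt3 K A a₀ a₁ a₂) =
      ψ (pt3 K A a₀ (innerC K A φ a₁) a₂) - φ (pt3 K A a₀ (innerC K A ψ a₁) a₂) := rfl

lemma bracket1_eq (ψ φ : Tpow K A 2 →ₗ[K] A) :
    bracket1 K A ψ φ = ψ ∘ₗ Lf K A (innerC K A φ) - φ ∘ₗ Lf K A (innerC K A ψ) := rfl

lemma Lf_t3 (f : Tpow K A 0 →ₗ[K] A) (x y z : A) :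
    Lf K A f (pt3 K A x y z) = pt3 K A x (f y) z := rfl

lemma lr_t3 (a a' x y z : A) :
    lmulL K A 2 a (rmulL K A 2 a' (pt3 K A x y z)) = pt3 K A (a * x) y (z * a') := rfl

lemma tact_t3 (act : H →ₗ[K] A →ₗ[K] A) (b₀ b₁ b₂ : H) (x y z : A) :
    tact K A H act 2 (pt3 K H b₀ b₁ b₂) (pt3 K A x y z) =
      pt3 K A (act b₀ x) (act b₁ y) (act b₂ z) := rfl

lemma pt3_add_mid (a x y c : A) : pt3 K A a (x + y) c = pt3 K A a x c + pt3 K A a y c := by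
  show (a ⊗ₜ[K] ((x + y) ⊗ₜ[K] c) : A ⊗[K] (A ⊗[K] A)) =
    a ⊗ₜ[K] (x ⊗ₜ[K] c) + a ⊗ₜ[K] (y ⊗ₜ[K] c)
  rw [TensorProduct.add_tmul, TensorProduct.tmul_add]

lemma pt3_smul_mid (r : K) (a x c : A) : pt3 K A a (r • x) c = r • pt3 K A a x c := by
  show (a ⊗ₜ[K] ((r • x) ⊗ₜ[K] c) : A ⊗[K] (A ⊗[K] A)) = r • (a ⊗ₜ[K] (x ⊗ₜ[K] c))
  rw [← TensorProduct.smul_tmul', TensorProduct.tmul_smul]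

lemma pt3_smul_left (r : K) (a x c : A) : pt3 K A (r • a) x c = r • pt3 K A a x c := by
  show ((r • a) ⊗ₜ[K] (x ⊗ₜ[K] c) : A ⊗[K] (A ⊗[K] A)) = r • (a ⊗ₜ[K] (x ⊗ₜ[K] c))
  rw [← TensorProduct.smul_tmul']

lemma pt3_smul_right (r : K) (a x c : A) : pt3 K A a x (r • c) = r • pt3 K A a x c := by
  show (a ⊗ₜ[K] (x ⊗ₜ[K] (r • c)) : A ⊗[K] (A ⊗[K] A)) = r • (a ⊗ₜ[K] (x ⊗ₜ[K] c))
  rw [TensorProduct.tmul_smul, TensorProduct.tmul_smul]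

lemma Lf_lmul (f : Tpow K A 0 →ₗ[K] A) (a : A) (t : Tpow K A 2) :
    Lf K A f (lmulL K A 2 a t) = lmulL K A 2 a (Lf K A f t) := by
  have key : Lf K A f ∘ₗ lmulL K A 2 a = lmulL K A 2 a ∘ₗ Lf K A f :=
    tpow2_ext fun _ _ _ => rfl
  exact LinearMap.congr_fun key t

lemma Lf_rmul (f : Tpow K A 0 →ₗ[K] A) (a : A) (t : Tpow K A 2) :
    Lf K A f (rmulL K A 2 a t) = rmulL K A 2 a (Lf K A f t) := by
  have key : Lf K A f ∘ₗ rmulL K A 2 a = rmulL K A 2 a ∘ₗ Lf K A f :=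
    tpow2_ext fun _ _ _ => rfl
  exact LinearMap.congr_fun key t

lemma Lf_tact (act : H →ₗ[K] A →ₗ[K] A) (f : Tpow K A 0 →ₗ[K] A)
    (hf : ∀ (b : H) (x : A), f (act b x) = act b (f x))
    (h : Tpow K H 2) (t : Tpow K A 2) :
    Lf K A f (tact K A H act 2 h t) = tact K A H act 2 h (Lf K A f t) := by
  have key : ∀ x y z : A, Lf K A f ∘ₗ (tact K A H act 2).flip (pt3 K A x y z) =
      (tact K A H act 2).flip (Lf K A f (pt3 K A x y z)) := by
    intro x y z
    apply tpow2_ext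
    intro b₀ b₁ b₂
    show Lf K A f (tact K A H act 2 (pt3 K H b₀ b₁ b₂) (pt3 K A x y z)) =
      tact K A H act 2 (pt3 K H b₀ b₁ b₂) (Lf K A f (pt3 K A x y z))
    rw [tact_t3, Lf_t3, Lf_t3, tact_t3, hf]
  have key2 : Lf K A f ∘ₗ tact K A H act 2 h = tact K A H act 2 h ∘ₗ Lf K A f := by
    apply tpow2_ext
    intro x y z
    exact LinearMap.congr_fun (key x y z) h
  exact LinearMap.congr_fun key2 t

lemma Lf_xAct (act : H →ₗ[K] A →ₗ[K] A) (f : Tpow K A 0 →ₗ[K] A)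
    (hf : ∀ (b : H) (x : A), f (act b x) = act b (f x))
    (a a' : A) (b : H) (t : Tpow K A 2) :
    Lf K A f (xActP K A H act 2 a a' b t) = xActP K A H act 2 a a' b (Lf K A f t) := by
  show Lf K A f (lmulL K A 2 a (rmulL K A 2 a' (tact K A H act 2 (itComul K H 2 b) t))) =
    lmulL K A 2 a (rmulL K A 2 a' (tact K A H act 2 (itComul K H 2 b) (Lf K A f t)))
  rw [Lf_lmul, Lf_rmul, Lf_tact act f hf]

lemma itComul_one_eq : itComul K H 1 = Coalgebra.comul (R := K) := by
  show LinearMap.lTensor H (itComul K H 0) ∘ₗ Coalgebra.comul (R := K) = _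
  show LinearMap.lTensor H LinearMap.id ∘ₗ Coalgebra.comul (R := K) = _
  rw [LinearMap.lTensor_id, LinearMap.id_comp]

lemma itComul_two_eq (b : H) :
    itComul K H 2 b =
      LinearMap.lTensor H (Coalgebra.comul (R := K)) (Coalgebra.comul (R := K) b) := by
  show LinearMap.lTensor H (itComul K H 1) (Coalgebra.comul (R := K) b) = _
  rw [itComul_one_eq]
  rfl

lemma itComul_two_one : itComul K H 2 (1 : H) =
    (1 : H) ⊗ₜ[K] ((1 : H) ⊗ₜ[K] (1 : H)) := by
  rw [itComul_two_eq]
  rw [Bialgebra.comul_one, Algebra.TensorProduct.one_def, LinearMap.lTensor_tmul,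
    Bialgebra.comul_one, Algebra.TensorProduct.one_def]

lemma itComul_two_one' : itComul K H 2 (1 : H) = pt3 K H 1 1 1 := itComul_two_one

variable (M : ModAlg K A H)

lemma xlin_t3 {ψ : Tpow K A 2 →ₗ[K] A} (hψ : IsXLinear K A H M.act 1 ψ)
    (a₀ a₁ a₂ : A) :
    ψ (pt3 K A a₀ a₁ a₂) = a₀ * innerC K A ψ a₁ * a₂ := by
  have h : ψ (xActP K A H M.act 2 a₀ a₂ 1 (pt3 K A 1 a₁ 1)) =
      a₀ * M.act 1 (ψ (pt3 K A 1 a₁ 1)) * a₂ :=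
    hψ a₀ a₂ 1 _
  rw [M.act_one] at h
  have e : xActP K A H M.act 2 a₀ a₂ 1 (pt3 K A 1 a₁ 1) = pt3 K A a₀ a₁ a₂ := by
    show lmulL K A 2 a₀ (rmulL K A 2 a₂ (tact K A H M.act 2 (itComul K H 2 1) (pt3 K A 1 a₁ 1))) = _
    rw [itComul_two_one', tact_t3]
    simp only [M.act_one]
    rw [lr_t3, mul_one, one_mul]
  rw [e] at h
  exact h

lemma innerC_equiv {ψ : Tpow K A 2 →ₗ[K] A} (hψ : IsXLinear K A H M.act 1 ψ)
    (b : H) (x : A) :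
    innerC K A ψ (M.act b x) = M.act b (innerC K A ψ x) := by
  have h : ψ (xActP K A H M.act 2 (1:A) (1:A) b (pt3 K A 1 x 1)) =
      (1:A) * M.act b (ψ (pt3 K A 1 x 1)) * (1:A) :=
    hψ 1 1 b _
  rw [one_mul, mul_one] at h
  set c : H ⊗[K] H →ₗ[K] H :=
    (TensorProduct.rid K H).toLinearMap ∘ₗ
      LinearMap.lTensor H (Coalgebra.counit (R := K)) with hc
  set C : Tpow K H 2 →ₗ[K] H :=
    ((TensorProduct.lid K H).toLinearMap ∘ₗ
        LinearMap.rTensor H (Coalgebra.counit (R := K))) ∘ₗ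
      LinearMap.lTensor H c with hC
  have hcval : ∀ u v : H, c (u ⊗ₜ[K] v) = Coalgebra.counit (R := K) v • u := by
    intro u v
    rw [hc, LinearMap.comp_apply, LinearMap.lTensor_tmul]
    simp
  have hCval : ∀ b₀ b₁ b₂ : H, C (pt3 K H b₀ b₁ b₂) =
      Coalgebra.counit (R := K) b₀ • (Coalgebra.counit (R := K) b₂ • b₁) := by
    intro b₀ b₁ b₂
    show ((TensorProduct.lid K H).toLinearMap ∘ₗ
        LinearMap.rTensor H (Coalgebra.counit (R := K)))
        (LinearMap.lTensor H c (b₀ ⊗ₜ[K] (b₁ ⊗ₜ[K] b₂))) = _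
    rw [LinearMap.lTensor_tmul, hcval, TensorProduct.tmul_smul]
    rw [LinearMap.comp_apply, map_smul, LinearMap.rTensor_tmul, map_smul,
      LinearEquiv.coe_coe, TensorProduct.lid_tmul]
    exact smul_comm _ _ _
  have hCit : C (itComul K H 2 b) = b := by
    show ((TensorProduct.lid K H).toLinearMap ∘ₗ
        LinearMap.rTensor H (Coalgebra.counit (R := K)))
        (LinearMap.lTensor H c (itComul K H 2 b)) = b
    rw [itComul_two_eq, ← LinearMap.comp_apply (LinearMap.lTensor H c),
      ← LinearMap.lTensor_comp]
    have hcc : c ∘ₗ Coalgebra.comul (R := K) = (LinearMap.id : H →ₗ[K] H) := by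
      apply LinearMap.ext; intro u
      rw [LinearMap.comp_apply, hc, LinearMap.comp_apply,
        Coalgebra.lTensor_counit_comul]
      simp
    rw [hcc, LinearMap.lTensor_id, LinearMap.id_apply, LinearMap.comp_apply,
      Coalgebra.rTensor_counit_comul]
    simp
  have hLR : (ψ ∘ₗ lmulL K A 2 1 ∘ₗ rmulL K A 2 1) ∘ₗ
        ((tact K A H M.act 2).flip (pt3 K A 1 x 1)) =
      (innerC K A ψ ∘ₗ (M.act.flip x)) ∘ₗ C := by
    apply tpow2_ext
    intro b₀ b₁ b₂
    show ψ (lmulL K A 2 1 (rmulL K A 2 1 (tact K A H M.act 2 (pt3 K H b₀ b₁ b₂) (pt3 K A 1 x 1)))) =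
      innerC K A ψ (M.act (C (pt3 K H b₀ b₁ b₂)) x)
    rw [tact_t3, lr_t3, hCval, M.act_unit, M.act_unit, one_mul, mul_one,
      pt3_smul_left, pt3_smul_right, map_smul ψ, map_smul ψ, map_smul M.act, map_smul M.act,
      LinearMap.smul_apply, LinearMap.smul_apply, innerC_smul_arg, innerC_smul_arg]
    rfl
  have hfin := LinearMap.congr_fun hLR (itComul K H 2 b)
  have e2 : ((innerC K A ψ ∘ₗ M.act.flip x) ∘ₗ C) (itComul K H 2 b) =
      innerC K A ψ (M.act b x) := by
    show innerC K A ψ (M.act (C (itComul K H 2 b)) x) = _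
    rw [hCit]
  exact e2.symm.trans (hfin.symm.trans h)

lemma face20_t4 (x₀ x₁ x₂ x₃ : A) :
    face K A 2 0 (pt4 K A x₀ x₁ x₂ x₃) = pt3 K A (x₀ * x₁) x₂ x₃ := rfl

lemma face21_t4 (x₀ x₁ x₂ x₃ : A) :
    face K A 2 1 (pt4 K A x₀ x₁ x₂ x₃) = pt3 K A x₀ (x₁ * x₂) x₃ := rfl

lemma face22_t4 (x₀ x₁ x₂ x₃ : A) :
    face K A 2 2 (pt4 K A x₀ x₁ x₂ x₃) = pt3 K A x₀ x₁ (x₂ * x₃) := rfl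

lemma barDiff_two_apply (x₀ x₁ x₂ x₃ : A) :
    barDiff K A 2 (pt4 K A x₀ x₁ x₂ x₃) =
      pt3 K A (x₀ * x₁) x₂ x₃ - pt3 K A x₀ (x₁ * x₂) x₃ + pt3 K A x₀ x₁ (x₂ * x₃) := by
  rw [barDiff]
  rw [Finset.sum_range_succ, Finset.sum_range_succ, Finset.sum_range_one]
  rw [LinearMap.add_apply, LinearMap.add_apply, LinearMap.smul_apply,
    LinearMap.smul_apply, LinearMap.smul_apply]
  rw [face20_t4, face21_t4, face22_t4]
  rw [pow_zero, pow_one, neg_one_sq, one_smul, one_smul, neg_one_smul,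
    ← sub_eq_add_neg]

lemma bracket1_xlin {ψ φ : Tpow K A 2 →ₗ[K] A}
    (hψ : IsXLinear K A H M.act 1 ψ) (hφ : IsXLinear K A H M.act 1 φ) :
    IsXLinear K A H M.act 1 (bracket1 K A ψ φ) := by
  intro a a' b t
  have hψ2 : ∀ (a a' : A) (b : H) (t : Tpow K A 2),
      ψ (xActP K A H M.act 2 a a' b t) = a * M.act b (ψ t) * a' := hψ
  have hφ2 : ∀ (a a' : A) (b : H) (t : Tpow K A 2),
      φ (xActP K A H M.act 2 a a' b t) = a * M.act b (φ t) * a' := hφ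
  have hψe := innerC_equiv M hψ
  have hφe := innerC_equiv M hφ
  show bracket1 K A ψ φ (xActP K A H M.act 2 a a' b t) =
    a * M.act b (bracket1 K A ψ φ t) * a'
  rw [bracket1_eq, LinearMap.sub_apply, LinearMap.sub_apply, LinearMap.comp_apply,
    LinearMap.comp_apply, LinearMap.comp_apply, LinearMap.comp_apply,
    Lf_xAct M.act _ hφe, Lf_xAct M.act _ hψe, hψ2, hφ2, map_sub, mul_sub, sub_mul]

lemma bracket1_pure {ψ φ : Tpow K A 2 →ₗ[K] A}
    (hψ : IsXLinear K A H M.act 1 ψ) (hφ : IsXLinear K A H M.act 1 φ)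
    (a₀ a₁ a₂ : A) :
    bracket1 K A ψ φ (pt3 K A a₀ a₁ a₂) =
      a₀ * (innerC K A ψ (innerC K A φ a₁) - innerC K A φ (innerC K A ψ a₁)) * a₂ := by
  rw [bracket1_t3, xlin_t3 M hψ, xlin_t3 M hφ, mul_sub, sub_mul]

lemma innerC_deriv {ψ : Tpow K A 2 →ₗ[K] A} (hψ : IsXLinear K A H M.act 1 ψ)
    (hd : ψ ∘ₗ barDiff K A 2 = 0) (a b : A) :
    innerC K A ψ (a * b) = a * innerC K A ψ b + innerC K A ψ a * b := by
  have h := LinearMap.congr_fun hd (pt4 K A 1 a b 1)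
  rw [LinearMap.comp_apply, barDiff_two_apply, map_add, map_sub,
    LinearMap.zero_apply] at h
  rw [xlin_t3 M hψ, xlin_t3 M hψ, xlin_t3 M hψ] at h
  rw [one_mul, one_mul, one_mul, mul_one, mul_one, mul_one] at h
  rw [sub_add_eq_add_sub, sub_eq_zero] at h
  exact h.symm

lemma comm_deriv {ψ φ : Tpow K A 2 →ₗ[K] A}
    (hψ : IsXLinear K A H M.act 1 ψ) (hφ : IsXLinear K A H M.act 1 φ)
    (hdψ : ψ ∘ₗ barDiff K A 2 = 0) (hdφ : φ ∘ₗ barDiff K A 2 = 0) (u v : A) :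
    innerC K A ψ (innerC K A φ (u * v)) - innerC K A φ (innerC K A ψ (u * v)) =
      u * (innerC K A ψ (innerC K A φ v) - innerC K A φ (innerC K A ψ v)) +
        (innerC K A ψ (innerC K A φ u) - innerC K A φ (innerC K A ψ u)) * v := by
  rw [innerC_deriv M hφ hdφ, innerC_deriv M hψ hdψ, innerC_add_arg, innerC_add_arg,
    innerC_deriv M hψ hdψ, innerC_deriv M hψ hdψ,
    innerC_deriv M hφ hdφ, innerC_deriv M hφ hdφ]
  rw [mul_sub, sub_mul]
  abel

lemma bracket1_d {ψ φ : Tpow K A 2 →ₗ[K] A}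
    (hψ : IsXLinear K A H M.act 1 ψ) (hφ : IsXLinear K A H M.act 1 φ)
    (hdψ : ψ ∘ₗ barDiff K A 2 = 0) (hdφ : φ ∘ₗ barDiff K A 2 = 0) :
    bracket1 K A ψ φ ∘ₗ barDiff K A 2 = 0 := by
  apply tpow3_ext
  intro x₀ x₁ x₂ x₃
  rw [LinearMap.comp_apply, barDiff_two_apply, map_add, map_sub,
    LinearMap.zero_apply]
  rw [bracket1_pure M hψ hφ, bracket1_pure M hψ hφ, bracket1_pure M hψ hφ]
  rw [comm_deriv M hψ hφ hdψ hdφ]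
  noncomm_ring

lemma innerC_bracket (ψ φ : Tpow K A 2 →ₗ[K] A) (a : A) :
    innerC K A (bracket1 K A ψ φ) a =
      innerC K A ψ (innerC K A φ a) - innerC K A φ (innerC K A ψ a) := rfl

lemma dbl_pure {ψ φ χ : Tpow K A 2 →ₗ[K] A}
    (hψ : IsXLinear K A H M.act 1 ψ) (hφ : IsXLinear K A H M.act 1 φ)
    (hχ : IsXLinear K A H M.act 1 χ) (a₀ a₁ a₂ : A) :
    bracket1 K A (bracket1 K A ψ φ) χ (pt3 K A a₀ a₁ a₂) =
      a₀ * (innerC K A ψ (innerC K A φ (innerC K A χ a₁)) -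
            innerC K A φ (innerC K A ψ (innerC K A χ a₁))) * a₂ -
        a₀ * (innerC K A χ (innerC K A ψ (innerC K A φ a₁)) -
              innerC K A χ (innerC K A φ (innerC K A ψ a₁))) * a₂ := by
  rw [bracket1_t3, bracket1_pure M hψ hφ, innerC_bracket, xlin_t3 M hχ,
    innerC_sub_arg]

lemma innerC_add (ψ ψ' : Tpow K A 2 →ₗ[K] A) (a : A) :
    innerC K A (ψ + ψ') a = innerC K A ψ a + innerC K A ψ' a := rfl

lemma innerC_smul (c : K) (ψ : Tpow K A 2 →ₗ[K] A) (a : A) :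
    innerC K A (c • ψ) a = c • innerC K A ψ a := rfl

lemma bracket1_add_left (ψ ψ' φ : Tpow K A 2 →ₗ[K] A) :
    bracket1 K A (ψ + ψ') φ = bracket1 K A ψ φ + bracket1 K A ψ' φ := by
  apply tpow2_ext
  intro a₀ a₁ a₂
  rw [LinearMap.add_apply, bracket1_t3, bracket1_t3, bracket1_t3,
    LinearMap.add_apply, innerC_add, pt3_add_mid, map_add]
  abel

lemma bracket1_smul_left (c : K) (ψ φ : Tpow K A 2 →ₗ[K] A) :
    bracket1 K A (c • ψ) φ = c • bracket1 K A ψ φ := by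
  apply tpow2_ext
  intro a₀ a₁ a₂
  rw [LinearMap.smul_apply, bracket1_t3, bracket1_t3, LinearMap.smul_apply,
    innerC_smul, pt3_smul_mid, map_smul, smul_sub]

lemma bracket1_add_right (ψ φ φ' : Tpow K A 2 →ₗ[K] A) :
    bracket1 K A ψ (φ + φ') = bracket1 K A ψ φ + bracket1 K A ψ φ' := by
  apply tpow2_ext
  intro a₀ a₁ a₂
  rw [LinearMap.add_apply, bracket1_t3, bracket1_t3, bracket1_t3,
    LinearMap.add_apply, innerC_add, pt3_add_mid, map_add]
  abel

lemma bracket1_smul_right (c : K) (ψ φ : Tpow K A 2 →ₗ[K] A) :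
    bracket1 K A ψ (c • φ) = c • bracket1 K A ψ φ := by
  apply tpow2_ext
  intro a₀ a₁ a₂
  rw [LinearMap.smul_apply, bracket1_t3, bracket1_t3, LinearMap.smul_apply,
    innerC_smul, pt3_smul_mid, map_smul, smul_sub]

lemma bracket1_antisymm (ψ φ : Tpow K A 2 →ₗ[K] A) :
    bracket1 K A ψ φ = -bracket1 K A φ ψ := by
  apply tpow2_ext
  intro a₀ a₁ a₂
  rw [LinearMap.neg_apply, bracket1_t3, bracket1_t3, neg_sub]

end AuxBracket
end HGDefs

/-- The bracket
`[ψ, φ](a₀ ⊗ a₁ ⊗ a₂) = ψ(a₀ ⊗ φ(1 ⊗ a₁ ⊗ 1) ⊗ a₂) − φ(a₀ ⊗ ψ(1 ⊗ a₁ ⊗ 1) ⊗ a₂)` makes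
the degree-1 Hopf-Hochschild cocycles into a Lie algebra over `K`: the bracket is bilinear,
antisymmetric, preserves (`X`-linear) cocycles, and satisfies the Jacobi identity. -/
theorem degree_one_cocycles_lie_algebra
    {K A H : Type u} [Field K] [Ring A] [Algebra K A] [Ring H] [Bialgebra K H]
    (M : ModAlg K A H) :
    -- defining formula of the bracket
    (∀ (ψ φ : Tpow K A 2 →ₗ[K] A) (a₀ a₁ a₂ : A),
      bracket1 K A ψ φ (a₀ ⊗ₜ[K] (a₁ ⊗ₜ[K] a₂)) =
        ψ (a₀ ⊗ₜ[K] (φ ((1 : A) ⊗ₜ[K] (a₁ ⊗ₜ[K] (1 : A))) ⊗ₜ[K] a₂)) -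
          φ (a₀ ⊗ₜ[K] (ψ ((1 : A) ⊗ₜ[K] (a₁ ⊗ₜ[K] (1 : A))) ⊗ₜ[K] a₂))) ∧
    -- bilinearity
    (∀ ψ ψ' φ : Tpow K A 2 →ₗ[K] A,
      bracket1 K A (ψ + ψ') φ = bracket1 K A ψ φ + bracket1 K A ψ' φ) ∧
    (∀ (c : K) (ψ φ : Tpow K A 2 →ₗ[K] A),
      bracket1 K A (c • ψ) φ = c • bracket1 K A ψ φ) ∧
    (∀ ψ φ φ' : Tpow K A 2 →ₗ[K] A,
      bracket1 K A ψ (φ + φ') = bracket1 K A ψ φ + bracket1 K A ψ φ') ∧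
    (∀ (c : K) (ψ φ : Tpow K A 2 →ₗ[K] A),
      bracket1 K A ψ (c • φ) = c • bracket1 K A ψ φ) ∧
    -- antisymmetry
    (∀ ψ φ : Tpow K A 2 →ₗ[K] A, bracket1 K A ψ φ = -bracket1 K A φ ψ) ∧
    -- the bracket of X-linear cocycles is an X-linear cocycle
    (∀ ψ φ : Tpow K A 2 →ₗ[K] A,
      IsXLinear K A H M.act 1 ψ → IsXLinear K A H M.act 1 φ →
      ψ ∘ₗ barDiff K A 2 = 0 → φ ∘ₗ barDiff K A 2 = 0 →
      IsXLinear K A H M.act 1 (bracket1 K A ψ φ) ∧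
        bracket1 K A ψ φ ∘ₗ barDiff K A 2 = 0) ∧
    -- Jacobi identity
    (∀ ψ φ χ : Tpow K A 2 →ₗ[K] A,
      IsXLinear K A H M.act 1 ψ → IsXLinear K A H M.act 1 φ →
      IsXLinear K A H M.act 1 χ →
      bracket1 K A (bracket1 K A ψ φ) χ + bracket1 K A (bracket1 K A φ χ) ψ +
          bracket1 K A (bracket1 K A χ ψ) φ = 0) := by
  refine ⟨?_, bracket1_add_left, bracket1_smul_left, bracket1_add_right,
    bracket1_smul_right, bracket1_antisymm, ?_, ?_⟩
  · intro ψ φ a₀ a₁ a₂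
    rw [bracket1_apply, innerC_apply, innerC_apply]
  · intro ψ φ hψ hφ hdψ hdφ
    exact ⟨bracket1_xlin M hψ hφ, bracket1_d M hψ hφ hdψ hdφ⟩
  · intro ψ φ χ hψ hφ hχ
    apply tpow2_ext
    intro a₀ a₁ a₂
    rw [LinearMap.add_apply, LinearMap.add_apply, LinearMap.zero_apply,
      dbl_pure M hψ hφ hχ, dbl_pure M hφ hχ hψ, dbl_pure M hχ hψ hφ]
    noncomm_ring
end
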